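/- arXiv:funct-an/9612007 — 10 statements merged into one kernel-verified Lean document; each statement's English description precedes it below -/
import Mathlib

section
/- Let T be a regular bounded linear operator on a complex Banach space X and let S ∈ B(X) be a generalized inverse of T. Then for every i ≥ 1 and every j with 0 ≤ j ≤ i one has T^i ∘ S^i ∘ T^j = T^i ∘ S^(i−j), and for every j ≥ i one has T^i ∘ S^i ∘ T^j = T^j. -/
/-- Let `T` be a regular bounded linear operator on a complex Banach space `X`
and let `S ∈ B(X)` be a generalized inverse of `T`.  Then for every `i ≥ 1` and every `j` with
`0 ≤ j ≤ i` one has `T^i ∘ S^i ∘ T^j = T^i ∘ S^(i-j)`, and for every `j ≥ i` one has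
`T^i ∘ S^i ∘ T^j = T^j`. -/
theorem stmt0 {X : Type*} [NormedAddCommGroup X] [NormedSpace ℂ X] [CompleteSpace X]
    (T S : X →L[ℂ] X)
    (hTST : T * S * T = T) (hSTS : S * T * S = S)
    (hreg : ∀ n : ℕ, LinearMap.ker ((T ^ n : X →L[ℂ] X) : X →ₗ[ℂ] X) ≤ LinearMap.range (T : X →ₗ[ℂ] X)) :
    ∀ i : ℕ, 1 ≤ i → ∀ j : ℕ,
      (j ≤ i → T ^ i * S ^ i * T ^ j = T ^ i * S ^ (i - j)) ∧
      (i ≤ j → T ^ i * S ^ i * T ^ j = T ^ j) := by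
  -- Lemma A: if x ∈ ker (T^n) then T (S x) = x.
  have hA : ∀ (n : ℕ) (x : X), (T ^ n) x = 0 → T (S x) = x := by
    intro n x hx
    obtain ⟨y, hy : T y = x⟩ := hreg n (LinearMap.mem_ker.mpr hx)
    have : T (S (T y)) = (T * S * T) y := rfl
    rw [← hy] at *
    calc T (S (T y)) = (T * S * T) y := rfl
      _ = T y := by rw [hTST]
  -- Lemma B: if x ∈ ker (T^n) then T^{n+m} (S^m x) = 0.
  have hB : ∀ (m n : ℕ) (x : X), (T ^ n) x = 0 → (T ^ (n + m)) ((S ^ m) x) = 0 := by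
    intro m
    induction m with
    | zero => intro n x hx; simpa using hx
    | succ m ih =>
      intro n x hx
      have h1 : (T ^ (n + 1)) (S x) = 0 := by
        rw [pow_succ, ContinuousLinearMap.mul_apply, hA n x hx, hx]
      have h2 := ih (n + 1) (S x) h1
      have hrw : (S ^ (m + 1)) x = (S ^ m) (S x) := by
        rw [pow_succ, ContinuousLinearMap.mul_apply]
      rw [show n + (m + 1) = n + 1 + m by omega, hrw]
      exact h2
  -- Lemma L: for 1 ≤ k ≤ i, T^i * S^k * T = T^i * S^(k-1).
  have hL : ∀ i k : ℕ, 1 ≤ k → k ≤ i → T ^ i * S ^ k * T = T ^ i * S ^ (k - 1) := by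
    intro i k hk hki
    obtain ⟨k, rfl⟩ : ∃ k', k = k' + 1 := ⟨k - 1, by omega⟩
    ext x
    set w : X := S (T x) - x with hw
    have hTw : (T ^ 1) w = 0 := by
      simp only [pow_one, hw, map_sub]
      have : T (S (T x)) = (T * S * T) x := rfl
      rw [this, hTST]
      simp
    have hBw := hB k 1 w hTw
    have hcancel : (T ^ i) ((S ^ k) w) = 0 := by
      have : T ^ i = T ^ (i - (1 + k)) * T ^ (1 + k) := by
        rw [← pow_add]
        congr 1
        omega
      rw [this, ContinuousLinearMap.mul_apply, hBw, map_zero]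
    have hSx : S (T x) = x + w := by rw [hw]; abel
    calc (T ^ i * S ^ (k + 1) * T) x
        = (T ^ i) ((S ^ k) (S (T x))) := by
          simp only [ContinuousLinearMap.mul_apply, pow_succ]
      _ = (T ^ i) ((S ^ k) x) + (T ^ i) ((S ^ k) w) := by
          rw [hSx, map_add, map_add]
      _ = (T ^ i) ((S ^ k) x) := by rw [hcancel, add_zero]
      _ = (T ^ i * S ^ (k + 1 - 1)) x := by
          simp only [Nat.add_sub_cancel, ContinuousLinearMap.mul_apply]
  -- Main part for j ≤ i.
  have hMain : ∀ i : ℕ, 1 ≤ i → ∀ j : ℕ, j ≤ i →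
      T ^ i * S ^ i * T ^ j = T ^ i * S ^ (i - j) := by
    intro i hi j
    induction j with
    | zero => intro _; simp
    | succ j ih =>
      intro hji
      have h1 := ih (by omega)
      have h2 : T ^ i * S ^ i * T ^ (j + 1) = T ^ i * S ^ i * T ^ j * T := by
        rw [pow_succ, ← mul_assoc]
      rw [h2, h1, hL i (i - j) (by omega) (by omega), Nat.sub_sub]
  intro i hi j
  refine ⟨hMain i hi j, fun hij => ?_⟩
  have h3 : T ^ j = T ^ i * T ^ (j - i) := by
    rw [← pow_add]
    congr 1
    omega
  rw [h3, ← mul_assoc, hMain i hi i le_rfl]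
  simp
end

section
/- Let T be a regular bounded linear operator on a complex Banach space X and let S ∈ B(X) be a generalized inverse of T. Then for every i ≥ 1 and every j with 0 ≤ j ≤ i one has T^j ∘ S^i ∘ T^i = S^(i−j) ∘ T^i, and for every j ≥ i one has T^j ∘ S^i ∘ T^i = T^j. -/
/-- Auxiliary joint induction: for all `i`, `T * S^(i+1) * T^(i+1) = S^i * T^(i+1)` and
`T^(i+1) * S^(i+1) * T^(i+1) = T^(i+1)`. The first part uses the regularity hypothesis. -/
theorem stmt1_aux {X : Type*} [NormedAddCommGroup X] [NormedSpace ℂ X]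
    (T S : X →L[ℂ] X)
    (hTST : T * S * T = T)
    (hreg : ∀ n : ℕ, LinearMap.ker ((T ^ n : X →L[ℂ] X) : X →ₗ[ℂ] X) ≤ LinearMap.range (T : X →ₗ[ℂ] X)) :
    ∀ i : ℕ, (T * S ^ (i + 1) * T ^ (i + 1) = S ^ i * T ^ (i + 1)) ∧
      (T ^ (i + 1) * S ^ (i + 1) * T ^ (i + 1) = T ^ (i + 1)) := by
  intro i
  induction i with
  | zero => constructor <;> simpa using hTST
  | succ i ih =>
    obtain ⟨hP, hQ⟩ := ih
    have hP' : T * S ^ (i + 2) * T ^ (i + 2) = S ^ (i + 1) * T ^ (i + 2) := by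
      have key : ∀ x : X,
          (T * S) ((S ^ (i + 1) * T ^ (i + 2)) x) = (S ^ (i + 1) * T ^ (i + 2)) x := by
        intro x
        set z := (S ^ (i + 1) * T ^ (i + 2)) x with hzdef
        have hz1 : z - T x ∈ LinearMap.ker ((T ^ (i + 1) : X →L[ℂ] X) : X →ₗ[ℂ] X) := by
          rw [LinearMap.mem_ker]
          have h1 : (T ^ (i + 1)) z = (T ^ (i + 1) * S ^ (i + 1) * T ^ (i + 1)) (T x) := by
            simp [hzdef, pow_succ, ContinuousLinearMap.mul_apply]
          have : (T ^ (i + 1)) (z - T x) = 0 := by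
            rw [map_sub, h1, hQ]
            simp [ContinuousLinearMap.mul_apply]
          exact this
        obtain ⟨y, hy⟩ := hreg (i + 1) hz1
        have hz : z = T (y + x) := by
          rw [map_add, show T y = z - T x from hy]; abel
        calc (T * S) z = (T * S * T) (y + x) := by
              rw [hz]; simp [ContinuousLinearMap.mul_apply]
          _ = z := by rw [hTST, ← hz]
      have hrw : T * S ^ (i + 2) * T ^ (i + 2) = (T * S) * (S ^ (i + 1) * T ^ (i + 2)) := by
        rw [pow_succ' S (i + 1)]
        noncomm_ring
      ext x
      rw [hrw]
      exact key x
    refine ⟨hP', ?_⟩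
    calc T ^ (i + 2) * S ^ (i + 2) * T ^ (i + 2)
        = T ^ (i + 1) * (T * S ^ (i + 2) * T ^ (i + 2)) := by
          rw [pow_succ T (i + 1)]; noncomm_ring
      _ = T ^ (i + 1) * (S ^ (i + 1) * T ^ (i + 2)) := by rw [hP']
      _ = (T ^ (i + 1) * S ^ (i + 1) * T ^ (i + 1)) * T := by
          rw [pow_succ T (i + 1)]; noncomm_ring
      _ = T ^ (i + 1) * T := by rw [hQ]
      _ = T ^ (i + 2) := by rw [← pow_succ T (i + 1)]

/-- For `j ≤ i`, `T^j * S^i * T^i = S^(i-j) * T^i`. -/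
theorem stmt1_aux2 {X : Type*} [NormedAddCommGroup X] [NormedSpace ℂ X]
    (T S : X →L[ℂ] X)
    (hTST : T * S * T = T)
    (hreg : ∀ n : ℕ, LinearMap.ker ((T ^ n : X →L[ℂ] X) : X →ₗ[ℂ] X) ≤ LinearMap.range (T : X →ₗ[ℂ] X)) :
    ∀ j i : ℕ, j ≤ i → T ^ j * S ^ i * T ^ i = S ^ (i - j) * T ^ i := by
  intro j
  induction j with
  | zero => intro i _; simp
  | succ j ih =>
    intro i hji
    obtain ⟨m, rfl⟩ : ∃ m, i = m + 1 := ⟨i - 1, by omega⟩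
    have hjm : j ≤ m := by omega
    have hP := (stmt1_aux T S hTST hreg m).1
    calc T ^ (j + 1) * S ^ (m + 1) * T ^ (m + 1)
        = T ^ j * (T * S ^ (m + 1) * T ^ (m + 1)) := by
          rw [pow_succ T j]; noncomm_ring
      _ = T ^ j * (S ^ m * T ^ (m + 1)) := by rw [hP]
      _ = (T ^ j * S ^ m * T ^ m) * T := by rw [pow_succ T m]; noncomm_ring
      _ = (S ^ (m - j) * T ^ m) * T := by rw [ih m hjm]
      _ = S ^ (m + 1 - (j + 1)) * T ^ (m + 1) := by
          rw [pow_succ T m]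
          have : m + 1 - (j + 1) = m - j := by omega
          rw [this]; noncomm_ring

/-- Let `T` be a regular bounded linear operator on a complex Banach space `X`
and let `S ∈ B(X)` be a generalized inverse of `T`.  Then for every `i ≥ 1` and every `j` with
`0 ≤ j ≤ i` one has `T^j ∘ S^i ∘ T^i = S^(i-j) ∘ T^i`, and for every `j ≥ i` one has
`T^j ∘ S^i ∘ T^i = T^j`. -/
theorem stmt1 {X : Type*} [NormedAddCommGroup X] [NormedSpace ℂ X] [CompleteSpace X]
    (T S : X →L[ℂ] X)
    (hTST : T * S * T = T) (hSTS : S * T * S = S)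
    (hreg : ∀ n : ℕ, LinearMap.ker ((T ^ n : X →L[ℂ] X) : X →ₗ[ℂ] X) ≤ LinearMap.range (T : X →ₗ[ℂ] X)) :
    ∀ i : ℕ, 1 ≤ i → ∀ j : ℕ,
      (j ≤ i → T ^ j * S ^ i * T ^ i = S ^ (i - j) * T ^ i) ∧
      (i ≤ j → T ^ j * S ^ i * T ^ i = T ^ j) := by
  intro i hi j
  constructor
  · intro hji
    exact stmt1_aux2 T S hTST hreg j i hji
  · intro hij
    obtain ⟨m, rfl⟩ : ∃ m, i = m + 1 := ⟨i - 1, by omega⟩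
    have hQ := (stmt1_aux T S hTST hreg m).2
    obtain ⟨k, rfl⟩ : ∃ k, j = k + (m + 1) := ⟨j - (m + 1), by omega⟩
    calc T ^ (k + (m + 1)) * S ^ (m + 1) * T ^ (m + 1)
        = T ^ k * (T ^ (m + 1) * S ^ (m + 1) * T ^ (m + 1)) := by
          rw [pow_add]; noncomm_ring
      _ = T ^ k * T ^ (m + 1) := by rw [hQ]
      _ = T ^ (k + (m + 1)) := by rw [← pow_add]
end

section
/- Let T be a regular bounded linear operator on a complex Banach space X and let S ∈ B(X) be a generalized inverse of T. Then T^n ∘ S^n ∘ T^n = T^n for all n ≥ 1. -/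
/-- Let `T` be a regular bounded linear operator on a complex Banach space `X`
and let `S ∈ B(X)` be a generalized inverse of `T`.  Then `T^n ∘ S^n ∘ T^n = T^n`
for all `n ≥ 1`. -/
theorem stmt2 {X : Type*} [NormedAddCommGroup X] [NormedSpace ℂ X] [CompleteSpace X]
    (T S : X →L[ℂ] X)
    (hTST : T * S * T = T) (hSTS : S * T * S = S)
    (hreg : ∀ n : ℕ, LinearMap.ker ((T ^ n : X →L[ℂ] X) : X →ₗ[ℂ] X) ≤ LinearMap.range (T : X →ₗ[ℂ] X)) :
    ∀ n : ℕ, 1 ≤ n → T ^ n * S ^ n * T ^ n = T ^ n := by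
  -- pointwise version of `hTST`
  have hTST' : ∀ x : X, T (S (T x)) = T x := by
    intro x
    have := congrArg (fun f : X →L[ℂ] X => f x) hTST
    simpa [ContinuousLinearMap.mul_apply] using this
  -- key lemma
  have key : ∀ i j : ℕ, 1 ≤ j → ∀ m : X, (T ^ j) m = 0 → (T ^ (i + j)) ((S ^ i) m) = 0 := by
    intro i
    induction i with
    | zero =>
        intro j hj m hm
        simpa using hm
    | succ i ih =>
        intro j hj m hm
        -- m is in ker (T^j) ⊆ range T
        have hmem : m ∈ LinearMap.ker ((T ^ j : X →L[ℂ] X) : X →ₗ[ℂ] X) := by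
          exact LinearMap.mem_ker.mpr hm
        obtain ⟨u, hu⟩ := hreg j hmem
        have hu' : T u = m := hu
        set k : X := S m - u with hk
        have hTk : T k = 0 := by
          have : T (S m) = m := by rw [← hu']; exact hTST' u
          simp [hk, map_sub, this, hu']
        have hTk' : (T ^ (j + 1)) k = 0 := by
          rw [pow_succ]
          simp [ContinuousLinearMap.mul_apply, hTk]
        have hTu' : (T ^ (j + 1)) u = 0 := by
          rw [pow_succ]
          simp [ContinuousLinearMap.mul_apply, hu', hm]
        have hSm : S m = u + k := by simp [hk]
        have h1 : (T ^ (i + (j + 1))) ((S ^ i) u) = 0 := ih (j + 1) (by omega) u hTu'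
        have h2 : (T ^ (i + (j + 1))) ((S ^ i) k) = 0 := ih (j + 1) (by omega) k hTk'
        have hrw : (S ^ (i + 1)) m = (S ^ i) u + (S ^ i) k := by
          rw [pow_succ]
          simp [ContinuousLinearMap.mul_apply, hSm]
        have : (i + 1) + j = i + (j + 1) := by omega
        rw [this, hrw, map_add, h1, h2, add_zero]
  -- main induction
  intro n hn
  induction n, hn using Nat.le_induction with
  | base => simpa using hTST
  | succ n hn ih =>
      ext x
      have ih' : (T ^ n) ((S ^ n) ((T ^ n) x)) = (T ^ n) x := by
        have := congrArg (fun f : X →L[ℂ] X => f x) ih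
        simpa [ContinuousLinearMap.mul_apply] using this
      set w : X := (T ^ n) x with hw
      set k : X := S (T w) - w with hk
      have hTk : T k = 0 := by simp [hk, map_sub, hTST' w]
      have hSTw : S (T w) = w + k := by simp [hk]
      have hkill : (T ^ (n + 1)) ((S ^ n) k) = 0 := by
        have := key n 1 le_rfl k (by simpa using hTk)
        simpa using this
      have lhs : (T ^ (n + 1) * S ^ (n + 1) * T ^ (n + 1)) x
          = (T ^ (n + 1)) ((S ^ (n + 1)) ((T ^ (n + 1)) x)) := by
        simp [ContinuousLinearMap.mul_apply]
      have hT1 : (T ^ (n + 1)) x = T w := by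
        rw [pow_succ']
        simp [ContinuousLinearMap.mul_apply, hw]
      have hS1 : (S ^ (n + 1)) (T w) = (S ^ n) w + (S ^ n) k := by
        rw [pow_succ]
        simp [ContinuousLinearMap.mul_apply, hSTw]
      calc (T ^ (n + 1) * S ^ (n + 1) * T ^ (n + 1)) x
          = (T ^ (n + 1)) ((S ^ (n + 1)) ((T ^ (n + 1)) x)) := lhs
        _ = (T ^ (n + 1)) ((S ^ n) w) + (T ^ (n + 1)) ((S ^ n) k) := by
            rw [hT1, hS1, map_add]
        _ = (T ^ (n + 1)) ((S ^ n) w) := by rw [hkill, add_zero]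
        _ = T ((T ^ n) ((S ^ n) w)) := by
            rw [pow_succ']; simp [ContinuousLinearMap.mul_apply]
        _ = T w := by rw [hw]; rw [ih']
        _ = (T ^ (n + 1)) x := hT1.symm
end

section
/- Let U ⊆ ℂ be an open connected set containing 0, let T ∈ B(X), and let R(λ) = Σ_{n=0}^∞ λ^n T_n (with T_n ∈ B(X), the series converging on U) be such that R(λ) is a generalized inverse of T − λI for every λ ∈ U. Set P(λ) = (T − λI)∘R(λ) and Q(λ) = R(λ)∘(T − λI). If T_n = T_0^(n+1) for all n ≥ 1, then for every λ ∈ U one has ker(P(λ)) = ker(T∘T_0) and range(Q(λ)) = range(T_0∘T). -/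
/-- Let `U ⊆ ℂ` be an open connected set containing `0`, let `T ∈ B(X)`, and let
`R(λ) = Σ_{n=0}^∞ λ^n Tₙ` (with `Tₙ ∈ B(X)`, the series converging on `U`) be such that `R(λ)`
is a generalized inverse of `T - λI` for every `λ ∈ U`.  Set `P(λ) = (T - λI) ∘ R(λ)` and
`Q(λ) = R(λ) ∘ (T - λI)`.  If `Tₙ = T₀^(n+1)` for all `n ≥ 1`, then for every `λ ∈ U` one has
`ker (P(λ)) = ker (T ∘ T₀)` and `range (Q(λ)) = range (T₀ ∘ T)`. -/
theorem stmt3 {X : Type*} [NormedAddCommGroup X] [NormedSpace ℂ X] [CompleteSpace X]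
    (U : Set ℂ) (hU : IsOpen U) (hUc : IsConnected U) (h0U : (0 : ℂ) ∈ U)
    (T : X →L[ℂ] X) (A : ℕ → X →L[ℂ] X) (R : ℂ → X →L[ℂ] X)
    (hsum : ∀ l ∈ U, HasSum (fun n : ℕ => l ^ n • A n) (R l))
    (hgen : ∀ l ∈ U, (T - l • 1) * R l * (T - l • 1) = T - l • 1 ∧
                     R l * (T - l • 1) * R l = R l)
    (hcoef : ∀ n : ℕ, 1 ≤ n → A n = (A 0) ^ (n + 1)) :
    ∀ l ∈ U,
      LinearMap.ker (((T - l • 1) * R l : X →L[ℂ] X) : X →ₗ[ℂ] X) = LinearMap.ker ((T * A 0 : X →L[ℂ] X) : X →ₗ[ℂ] X) ∧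
      LinearMap.range ((R l * (T - l • 1) : X →L[ℂ] X) : X →ₗ[ℂ] X) = LinearMap.range ((A 0 * T : X →L[ℂ] X) : X →ₗ[ℂ] X) := by
  -- R 0 = A 0
  have hR0 : R 0 = A 0 := by
    have h1 : HasSum (fun n : ℕ => (0:ℂ) ^ n • A n) (A 0) := by
      have := hasSum_single (f := fun n : ℕ => (0:ℂ) ^ n • A n) 0
        (fun b hb => by simp [zero_pow hb])
      simpa using this
    exact (hsum 0 h0U).unique h1
  have hA0TA0 : A 0 * T * A 0 = A 0 := by
    have := (hgen 0 h0U).2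
    simpa [hR0] using this
  have hsucc_l : ∀ n : ℕ, A (n + 1) = A 0 * A n := by
    intro n
    rcases Nat.eq_zero_or_pos n with h | h
    · subst h; rw [hcoef 1 le_rfl, pow_two]
    · rw [hcoef (n+1) (by omega), hcoef n h, pow_succ']
  have hsucc_r : ∀ n : ℕ, A (n + 1) = A n * A 0 := by
    intro n
    rcases Nat.eq_zero_or_pos n with h | h
    · subst h; rw [hcoef 1 le_rfl, pow_two]
    · rw [hcoef (n+1) (by omega), hcoef n h, pow_succ]
  intro l hl
  set f : ℕ → X →L[ℂ] X := fun n => l ^ n • A n with hf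
  have hfs : HasSum f (R l) := hsum l hl
  have key_l : R l = A 0 + l • (A 0 * R l) := by
    have h2 : HasSum (fun n => l • (A 0 * f n)) (l • (A 0 * R l)) :=
      (hfs.mul_left (A 0)).const_smul l
    have heq : (fun n => f (n + 1)) = fun n => l • (A 0 * f n) := by
      funext n
      simp only [hf, hsucc_l n, mul_smul_comm, smul_smul, pow_succ']
    rw [← heq] at h2
    have h3 := (hasSum_nat_add_iff (f := f) 1).mp h2
    have h4 : R l = l • (A 0 * R l) + ∑ i ∈ Finset.range 1, f i := hfs.unique h3
    simpa [hf, add_comm] using h4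
  have key_r : R l = A 0 + l • (R l * A 0) := by
    have h2 : HasSum (fun n => l • (f n * A 0)) (l • (R l * A 0)) :=
      (hfs.mul_right (A 0)).const_smul l
    have heq : (fun n => f (n + 1)) = fun n => l • (f n * A 0) := by
      funext n
      simp only [hf, hsucc_r n, smul_mul_assoc, smul_smul, pow_succ']
    rw [← heq] at h2
    have h3 := (hasSum_nat_add_iff (f := f) 1).mp h2
    have h4 : R l = l • (R l * A 0) + ∑ i ∈ Finset.range 1, f i := hfs.unique h3
    simpa [hf, add_comm] using h4
  have hkerRA : ∀ x : X, R l x = 0 ↔ A 0 x = 0 := by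
    intro x
    constructor
    · intro hx
      have := congrArg (fun S : X →L[ℂ] X => S x) key_l
      simpa [hx, eq_comm] using this
    · intro hx
      have := congrArg (fun S : X →L[ℂ] X => S x) key_r
      simpa [hx, eq_comm] using this
  have hrangeRA : ∀ y : X, (∃ x, R l x = y) ↔ (∃ x, A 0 x = y) := by
    intro y
    constructor
    · rintro ⟨x, rfl⟩
      refine ⟨x + l • R l x, ?_⟩
      have := congrArg (fun S : X →L[ℂ] X => S x) key_l
      simp only [ContinuousLinearMap.add_apply, ContinuousLinearMap.smul_apply,
        ContinuousLinearMap.mul_apply, map_add, map_smul] at this ⊢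
      linear_combination (norm := module) -this
    · rintro ⟨x, rfl⟩
      refine ⟨x - l • A 0 x, ?_⟩
      have := congrArg (fun S : X →L[ℂ] X => S x) key_r
      simp only [ContinuousLinearMap.add_apply, ContinuousLinearMap.smul_apply,
        ContinuousLinearMap.mul_apply, map_sub, map_smul] at this ⊢
      linear_combination (norm := module) this
  obtain ⟨hg1, hg2⟩ := hgen l hl
  constructor
  · ext x
    simp only [LinearMap.mem_ker, ContinuousLinearMap.coe_coe, ContinuousLinearMap.mul_apply]
    constructor
    · intro hx
      -- R l x = R l ((T - l•1) (R l x)) = 0, hence A 0 x = 0, hence T (A 0 x)?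
      have hRx : R l x = 0 := by
        have := congrArg (fun S : X →L[ℂ] X => S x) hg2
        simp only [ContinuousLinearMap.mul_apply] at this
        rw [hx] at this
        simpa using this.symm
      have hA : A 0 x = 0 := (hkerRA x).mp hRx
      simp [hA]
    · intro hx
      -- T (A0 x) = 0 ⇒ A0 x = A0 (T (A0 x))?? need A0 x = 0
      have hA : A 0 x = 0 := by
        have := congrArg (fun S : X →L[ℂ] X => S x) hA0TA0
        simp only [ContinuousLinearMap.mul_apply] at this
        rw [hx] at this
        simpa using this.symm
      have hRx : R l x = 0 := (hkerRA x).mpr hA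
      simp [hRx]
  · ext y
    simp only [LinearMap.mem_range, ContinuousLinearMap.coe_coe, ContinuousLinearMap.mul_apply]
    constructor
    · rintro ⟨x, rfl⟩
      -- R l ((T-l•1) x) ∈ range (R l) = range (A 0) = range (A0 * T)
      obtain ⟨z, hz⟩ := (hrangeRA (R l ((T - l • 1) x))).mp ⟨_, rfl⟩
      -- A 0 z = R l ((T-l•1) x); need ∃ w, A 0 (T w) = this
      -- A 0 z = A 0 (T (A 0 z))
      refine ⟨R l ((T - l • 1) x), ?_⟩
      have := congrArg (fun S : X →L[ℂ] X => S z) hA0TA0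
      simp only [ContinuousLinearMap.mul_apply] at this
      rw [hz] at this
      exact this
    · rintro ⟨x, rfl⟩
      -- A 0 (T x) ∈ range (A 0) = range (R l) = range (R l * (T - l•1))
      obtain ⟨z, hz⟩ := (hrangeRA (A 0 (T x))).mpr ⟨_, rfl⟩
      -- R l z = A 0 (T x); and R l z = R l ((T-l•1)(R l z))
      refine ⟨R l z, ?_⟩
      have := congrArg (fun S : X →L[ℂ] X => S z) hg2
      simp only [ContinuousLinearMap.mul_apply] at this
      rw [hz] at this ⊢
      exact this
end

section
/- Let U ⊆ ℂ be an open connected set, let T ∈ B(X), and let R : U → B(X) be such that R(λ) is a generalized inverse of T − λI for every λ ∈ U. Set P(λ) = (T − λI)∘R(λ) and Q(λ) = R(λ)∘(T − λI). If there exist closed subspaces Z and W of X such that ker(P(λ)) = Z and range(Q(λ)) = W for all λ ∈ U, then R satisfies the resolvent identity on U, i.e. R(λ) − R(μ) = (λ − μ) R(λ)∘R(μ) for all λ, μ ∈ U. -/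
/-- Let `U ⊆ ℂ` be an open connected set, let `T ∈ B(X)`, and let
`R : U → B(X)` be such that `R(λ)` is a generalized inverse of `T - λI` for every `λ ∈ U`.
Set `P(λ) = (T - λI) ∘ R(λ)` and `Q(λ) = R(λ) ∘ (T - λI)`.  If there exist closed subspaces
`Z` and `W` of `X` such that `ker (P(λ)) = Z` and `range (Q(λ)) = W` for all `λ ∈ U`, then `R`
satisfies the resolvent identity on `U`:
`R(λ) - R(μ) = (λ - μ) R(λ) ∘ R(μ)` for all `λ, μ ∈ U`. -/
theorem stmt4 {X : Type*} [NormedAddCommGroup X] [NormedSpace ℂ X] [CompleteSpace X]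
    (U : Set ℂ) (hU : IsOpen U) (hUc : IsConnected U)
    (T : X →L[ℂ] X) (R : ℂ → X →L[ℂ] X)
    (hgen : ∀ l ∈ U, (T - l • 1) * R l * (T - l • 1) = T - l • 1 ∧
                     R l * (T - l • 1) * R l = R l)
    (Z W : Submodule ℂ X) (hZ : IsClosed (Z : Set X)) (hW : IsClosed (W : Set X))
    (hker : ∀ l ∈ U, LinearMap.ker (((T - l • 1) * R l : X →L[ℂ] X) : X →ₗ[ℂ] X) = Z)
    (hran : ∀ l ∈ U, LinearMap.range (((R l * (T - l • 1) : X →L[ℂ] X) : X →ₗ[ℂ] X)) = W) :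
    ∀ l ∈ U, ∀ m ∈ U, R l - R m = (l - m) • (R l * R m) := by
  intro l hl m hm
  set Al : X →L[ℂ] X := T - l • 1 with hAldef
  set Am : X →L[ℂ] X := T - m • 1 with hAmdef
  obtain ⟨hl1, hl2⟩ := hgen l hl
  obtain ⟨hm1, hm2⟩ := hgen m hm
  -- idempotency of the projections
  have hPmid : (Am * R m) * (Am * R m) = Am * R m := by
    rw [← mul_assoc, mul_assoc Am (R m) Am, ← mul_assoc, hm1]
  have hQlid : (R l * Al) * (R l * Al) = R l * Al := by
    rw [← mul_assoc, hl2]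
  -- common kernel gives P l * P m = P l
  have e1 : (Al * R l) * (Am * R m) = Al * R l := by
    ext x
    have hx : (Am * R m) x - x ∈ LinearMap.ker ((Al * R l : X →L[ℂ] X) : X →ₗ[ℂ] X) := by
      rw [hker l hl, ← hker m hm, LinearMap.mem_ker, map_sub]
      have := congrFun (congrArg DFunLike.coe hPmid) x
      simp only [ContinuousLinearMap.coe_coe, ContinuousLinearMap.mul_apply] at this ⊢
      rw [this, sub_self]
    rw [hker l hl, ← hker l hl, LinearMap.mem_ker, map_sub, sub_eq_zero] at hx
    simpa only [ContinuousLinearMap.coe_coe, ContinuousLinearMap.mul_apply] using hx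
  -- common range gives Q l * Q m = Q m
  have e2 : (R l * Al) * (R m * Am) = R m * Am := by
    ext x
    have hx : (R m * Am) x ∈ LinearMap.range ((R l * Al : X →L[ℂ] X) : X →ₗ[ℂ] X) := by
      rw [hran l hl, ← hran m hm]
      exact LinearMap.mem_range_self _ x
    obtain ⟨y, hy⟩ := hx
    have := congrFun (congrArg DFunLike.coe hQlid) y
    simp only [ContinuousLinearMap.coe_coe, ContinuousLinearMap.mul_apply] at this hy ⊢
    rw [← hy, this]
  -- key identity 1: R l * (Am * R m) = R l
  have key1 : R l * (Am * R m) = R l := by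
    calc R l * (Am * R m) = (R l * Al * R l) * (Am * R m) := by rw [hl2]
      _ = R l * ((Al * R l) * (Am * R m)) := by
          rw [mul_assoc (R l) Al (R l), mul_assoc]
      _ = R l * (Al * R l) := by rw [e1]
      _ = R l := by rw [← mul_assoc, hl2]
  -- key identity 2: (R l * Al) * R m = R m
  have key2 : R l * Al * R m = R m := by
    calc R l * Al * R m = R l * Al * (R m * Am * R m) := by rw [hm2]
      _ = R l * Al * (R m * Am) * R m := by rw [← mul_assoc]
      _ = R m * Am * R m := by rw [e2]
      _ = R m := hm2
  -- combine
  have hdiff : Am - Al = (l - m) • (1 : X →L[ℂ] X) := by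
    rw [hAldef, hAmdef, sub_smul]
    abel
  calc R l - R m
      = R l * (Am * R m) - R l * Al * R m := by rw [key1, key2]
    _ = R l * ((Am - Al) * R m) := by
        rw [sub_mul Am Al (R m), mul_sub (R l) (Am * R m) (Al * R m), mul_assoc (R l) Al (R m)]
    _ = (l - m) • (R l * R m) := by
        rw [hdiff, smul_mul_assoc, one_mul, mul_smul_comm]
end

section
/- Let U ⊆ ℂ be an open connected set containing 0, let T ∈ B(X), and let R(λ) = Σ_{n=0}^∞ λ^n T_n be an analytic function on U such that R(λ) is a generalized inverse of T − λI for every λ ∈ U. Then T_n = T_0^(n+1) for all n ≥ 1 if and only if R satisfies the resolvent identity R(λ) − R(μ) = (λ − μ) R(λ)∘R(μ) for all λ, μ ∈ U. -/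
open Filter Topology
open scoped ENNReal NNReal

/-- If a power series (in a Banach space over `ℂ`) sums to `0` on a ball around `0`, then all
its coefficients vanish. -/
lemma aux_coeff_zero {E : Type*} [NormedAddCommGroup E] [NormedSpace ℂ E]
    (C : ℕ → E) (ε : ℝ) (hε : 0 < ε)
    (h : ∀ l : ℂ, ‖l‖ < ε → HasSum (fun n : ℕ => l ^ n • C n) 0) :
    ∀ n, C n = 0 := by
  set p : FormalMultilinearSeries ℂ ℂ E :=
    fun n => ContinuousMultilinearMap.mkPiRing ℂ (Fin n) (C n) with hp
  have hpap : ∀ (n : ℕ) (y : ℂ), (p n fun _ => y) = y ^ n • C n := by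
    intro n y
    simp [hp, ContinuousMultilinearMap.mkPiRing_apply, Finset.prod_const]
  have hε2 : (0:ℝ) < ε / 2 := by linarith
  have hy0 : ‖((ε/2 : ℝ) : ℂ)‖ < ε := by
    rw [Complex.norm_real, Real.norm_eq_abs, abs_of_pos hε2]; linarith
  have hsum0 := h _ hy0
  have htend : Tendsto (fun n => ‖((ε/2:ℝ):ℂ) ^ n • C n‖) atTop (𝓝 0) := by
    simpa using hsum0.summable.tendsto_atTop_zero.norm
  obtain ⟨M, hM⟩ := htend.bddAbove_range
  rw [mem_upperBounds] at hM
  have hnorm : ∀ n : ℕ, ‖((ε/2:ℝ):ℂ) ^ n • C n‖ = ‖p n‖ * (ε/2) ^ n := by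
    intro n
    rw [norm_smul, norm_pow, Complex.norm_real, Real.norm_eq_abs, abs_of_pos hε2]
    rw [hp]
    rw [ContinuousMultilinearMap.norm_mkPiRing]
    ring
  have hrad : ((ε/2).toNNReal : ℝ≥0∞) ≤ p.radius := by
    apply p.le_radius_of_bound M
    intro n
    have h1 := hM _ (Set.mem_range_self n)
    rw [hnorm n] at h1
    rwa [Real.coe_toNNReal _ hε2.le]
  have hball : HasFPowerSeriesOnBall (0 : ℂ → E) p 0 ((ε/2).toNNReal) := by
    refine ⟨hrad, ?_, ?_⟩
    · exact_mod_cast Real.toNNReal_pos.mpr hε2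
    · intro y hy
      rw [mem_emetric_ball_zero_iff] at hy
      have hy' : ‖y‖ < ε := by
        have : ‖y‖ < ε / 2 := by
          have := ENNReal.coe_lt_coe.mp hy
          have h2 : (‖y‖₊ : ℝ) < ((ε/2).toNNReal : ℝ) := by exact_mod_cast this
          rwa [Real.coe_toNNReal _ hε2.le, coe_nnnorm] at h2
        linarith
      simpa [hpap] using h y hy'
  have hpz : p = 0 := hball.hasFPowerSeriesAt.eq_zero
  intro n
  have h1 : (p n fun _ => (1:ℂ)) = C n := by rw [hpap]; simp
  rw [hpz] at h1
  simpa using h1.symm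

/-- Let `U ⊆ ℂ` be an open connected set containing `0`, let `T ∈ B(X)`, and let
`R(λ) = Σ_{n=0}^∞ λ^n Tₙ` be an analytic function on `U` such that `R(λ)` is a generalized
inverse of `T - λI` for every `λ ∈ U`.  Then `Tₙ = T₀^(n+1)` for all `n ≥ 1` if and only if `R`
satisfies the resolvent identity `R(λ) - R(μ) = (λ - μ) R(λ)∘R(μ)` for all `λ, μ ∈ U`. -/
theorem stmt6 {X : Type*} [NormedAddCommGroup X] [NormedSpace ℂ X] [CompleteSpace X]
    (U : Set ℂ) (hU : IsOpen U) (hUc : IsConnected U) (h0U : (0 : ℂ) ∈ U)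
    (T : X →L[ℂ] X) (A : ℕ → X →L[ℂ] X) (R : ℂ → X →L[ℂ] X)
    (hsum : ∀ l ∈ U, HasSum (fun n : ℕ => l ^ n • A n) (R l))
    (hgen : ∀ l ∈ U, (T - l • 1) * R l * (T - l • 1) = T - l • 1 ∧
                     R l * (T - l • 1) * R l = R l) :
    (∀ n : ℕ, 1 ≤ n → A n = (A 0) ^ (n + 1)) ↔
    (∀ l ∈ U, ∀ m ∈ U, R l - R m = (l - m) • (R l * R m)) := by
  constructor
  · -- forward direction
    intro hA l hl m hm
    have hcoe : ∀ z ∈ U, HasSum (fun n : ℕ => z ^ n • (A 0) ^ (n+1)) (R z) := by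
      intro z hz
      have he : (fun n : ℕ => z ^ n • (A 0) ^ (n+1)) = fun n : ℕ => z ^ n • A n := by
        funext n
        match n with
        | 0 => simp
        | k+1 => rw [hA (k+1) (Nat.le_add_left 1 k)]
      rw [he]; exact hsum z hz
    -- key: R z * (1 - z • A 0) = A 0 = (1 - z • A 0) * R z
    have hker : ∀ z ∈ U, R z * (1 - z • A 0) = A 0 ∧ (1 - z • A 0) * R z = A 0 := by
      intro z hz
      set f : ℕ → (X →L[ℂ] X) := fun n => z ^ n • (A 0) ^ (n+1) with hf
      have hfs := hcoe z hz
      have hf0 : Tendsto f atTop (𝓝 0) := hfs.summable.tendsto_atTop_zero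
      have hfr : ∀ n, f n * (1 - z • A 0) = f n - f (n+1) := by
        intro n
        rw [hf]
        simp only [mul_sub, mul_one]
        congr 1
        rw [smul_mul_assoc, mul_smul_comm, smul_smul, ← pow_succ z, ← pow_succ (A 0)]
      have hfl : ∀ n, (1 - z • A 0) * f n = f n - f (n+1) := by
        intro n
        rw [hf]
        simp only [sub_mul, one_mul]
        congr 1
        rw [smul_mul_assoc, mul_smul_comm, smul_smul, ← pow_succ' z, ← pow_succ' (A 0)]
      have htel : Tendsto (fun N => ∑ i ∈ Finset.range N, (f i - f (i+1))) atTop (𝓝 (A 0)) := by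
        have heq : (fun N => ∑ i ∈ Finset.range N, (f i - f (i+1))) = fun N => f 0 - f N := by
          funext N; exact Finset.sum_range_sub' f N
        rw [heq]
        have hf00 : f 0 = A 0 := by simp [hf]
        simpa [hf00] using (tendsto_const_nhds (x := f 0) (f := atTop (α := ℕ))).sub hf0
      constructor
      · have h1 : HasSum (fun n => f n - f (n+1)) (R z * (1 - z • A 0)) := by
          have := (show HasSum f (R z) from hfs).mul_right (1 - z • A 0)
          simpa only [hfr] using this
        exact tendsto_nhds_unique h1.tendsto_sum_nat htel
      · have h1 : HasSum (fun n => f n - f (n+1)) ((1 - z • A 0) * R z) := by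
          have := (show HasSum f (R z) from hfs).mul_left (1 - z • A 0)
          simpa only [hfl] using this
        exact tendsto_nhds_unique h1.tendsto_sum_nat htel
    obtain ⟨hul, _⟩ := hker l hl
    obtain ⟨hvm, _⟩ := hker m hm
    set D : X →L[ℂ] X := R l - R m - (l - m) • (R l * R m) with hDdef
    have hDv : D * (1 - m • A 0) = 0 := by
      have e1 : R l * (1 - m • A 0) = A 0 + (l - m) • (R l * A 0) := by
        have hsplit : (1 : X →L[ℂ] X) - m • A 0 = (1 - l • A 0) + (l - m) • A 0 := by
          rw [sub_smul]; abel
        rw [hsplit, mul_add, hul, mul_smul_comm]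
      have e3 : ((l - m) • (R l * R m)) * (1 - m • A 0) = (l - m) • (R l * A 0) := by
        rw [smul_mul_assoc, mul_assoc, hvm]
      rw [hDdef, sub_mul, sub_mul, e1, e3, hvm]
      abel
    have hD : D = m • (D * A 0) := by
      have h1 := hDv
      rw [mul_sub, mul_one, mul_smul_comm, sub_eq_zero] at h1
      exact h1
    have hpow : ∀ n : ℕ, D = m ^ (n+1) • (D * (A 0) ^ (n+1)) := by
      intro n
      induction n with
      | zero => simpa using hD
      | succ k ih =>
        calc D = m ^ (k+1) • (D * A 0 ^ (k+1)) := ih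
        _ = m ^ (k+1) • ((m • (D * A 0)) * A 0 ^ (k+1)) := by rw [← hD]
        _ = m ^ (k+1+1) • (D * A 0 ^ (k+1+1)) := by
            rw [smul_mul_assoc, mul_assoc, smul_smul, ← pow_succ' (A 0) (k+1),
              ← pow_succ m (k+1)]
    have hDtend : Tendsto (fun n : ℕ => m • (D * (m ^ n • (A 0) ^ (n+1)))) atTop (𝓝 0) := by
      have h0 : Tendsto (fun n : ℕ => m ^ n • (A 0) ^ (n+1)) atTop (𝓝 0) :=
        (hcoe m hm).summable.tendsto_atTop_zero
      have := (h0.const_mul D).const_smul m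
      simpa using this
    have hDconst : (fun _ : ℕ => D) = fun n : ℕ => m • (D * (m ^ n • (A 0) ^ (n+1))) := by
      funext n
      rw [mul_smul_comm, smul_smul, ← pow_succ' m]
      exact hpow n
    have hD0 : D = 0 := by
      have h1 : Tendsto (fun _ : ℕ => D) atTop (𝓝 0) := by rw [hDconst]; exact hDtend
      exact (tendsto_nhds_unique h1 tendsto_const_nhds).symm
    rw [hDdef] at hD0
    exact sub_eq_zero.mp hD0
  · -- backward direction
    intro hres
    have hR0 : R 0 = A 0 := by
      have h1 := hsum 0 h0U
      have h2 : HasSum (fun n : ℕ => (0:ℂ) ^ n • A n) (A 0) := by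
        have heq : (fun n : ℕ => (0:ℂ) ^ n • A n)
            = fun n : ℕ => if n = 0 then A 0 else 0 := by
          funext n
          match n with
          | 0 => simp
          | k+1 => simp
        rw [heq]
        exact hasSum_ite_eq 0 (A 0)
      exact h1.unique h2
    set B : ℕ → (X →L[ℂ] X) := fun n => Nat.casesOn n (A 0) (fun k => A k * A 0) with hB
    obtain ⟨ε, hε, hball⟩ := Metric.isOpen_iff.mp hU 0 h0U
    have hzero : ∀ l : ℂ, ‖l‖ < ε → HasSum (fun n : ℕ => l ^ n • (A n - B n)) 0 := by
      intro l hlε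
      have hlU : l ∈ U := hball (by simpa [Metric.mem_ball] using hlε)
      have hs := hsum l hlU
      have hres0 := hres l hlU 0 h0U
      rw [hR0, sub_zero] at hres0
      have h4 : HasSum (fun n : ℕ => l ^ (n+1) • (A n * A 0)) (l • (R l * A 0)) := by
        have h5 := (hs.mul_right (A 0)).const_smul l
        simpa only [smul_mul_assoc, smul_smul, pow_succ'] using h5
      have h3 : HasSum (fun n : ℕ => l ^ n • B n) (R l) := by
        have h6 : HasSum (fun n : ℕ => l ^ (n+1) • B (n+1)) (l • (R l * A 0)) := h4
        have h7 := (hasSum_nat_add_iff (f := fun n : ℕ => l ^ n • B n) 1).mp h6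
        have h8 : l • (R l * A 0) + ∑ i ∈ Finset.range 1, l ^ i • B i = R l := by
          simp [hB]
          rw [← hres0]
          abel
        rwa [h8] at h7
      have h9 := hs.sub h3
      rw [sub_self] at h9
      simpa only [smul_sub] using h9
    have hAB : ∀ n, A n - B n = 0 := aux_coeff_zero _ ε hε hzero
    have hAB' : ∀ n, A n = B n := fun n => sub_eq_zero.mp (hAB n)
    have hAll : ∀ n : ℕ, A n = (A 0) ^ (n + 1) := by
      intro n
      induction n with
      | zero => simp
      | succ k ih =>
        have h : A (k+1) = A k * A 0 := hAB' (k+1)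
        rw [h, ih, ← pow_succ]
    exact fun n _ => hAll n
end

section
/- Let T ∈ B(X) and let U ⊆ ℂ be an open connected set. Suppose there exist two families of bounded projections P(λ), Q(λ) ∈ B(X), λ ∈ U, depending continuously on λ, such that range(P(λ)) = range(T − λI) and ker(Q(λ)) = ker(T − λI) for all λ ∈ U, and such that P(λ)∘P(μ) = P(λ) and Q(λ)∘Q(μ) = Q(μ) for all λ, μ ∈ U. Then there exists a generalized resolvent of T on U, i.e. a function Rg : U → B(X) such that Rg(λ) is a generalized inverse of T − λI for all λ ∈ U and Rg(λ) − Rg(μ) = (λ − μ) Rg(λ)∘Rg(μ) for all λ, μ ∈ U. -/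
theorem aux_exists_S {X : Type*} [NormedAddCommGroup X] [NormedSpace ℂ X] [CompleteSpace X]
    (A P Q : X →L[ℂ] X) (hP : P * P = P) (hQ : Q * Q = Q)
    (hPr : LinearMap.range (P : X →ₗ[ℂ] X) = LinearMap.range (A : X →ₗ[ℂ] X))
    (hQk : LinearMap.ker (Q : X →ₗ[ℂ] X) = LinearMap.ker (A : X →ₗ[ℂ] X)) :
    ∃ S : X →L[ℂ] X, A * S = P ∧ S * A = Q ∧ Q * S = S := by
  have hPidem : ∀ x : X, P (P x) = P x := fun x => congrFun (congrArg DFunLike.coe hP) x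
  have hQidem : ∀ x : X, Q (Q x) = Q x := fun x => congrFun (congrArg DFunLike.coe hQ) x
  -- P fixes range of A
  have hPA : ∀ x : X, P (A x) = A x := by
    intro x
    obtain ⟨w, (hw : P w = A x)⟩ : A x ∈ LinearMap.range (P : X →ₗ[ℂ] X) := by rw [hPr]; exact ⟨x, rfl⟩
    calc P (A x) = P (P w) := by rw [hw]
      _ = P w := hPidem w
      _ = A x := hw
  -- A is unchanged by Q
  have hAQ : ∀ x : X, A (Q x) = A x := by
    intro x
    have h1 : x - Q x ∈ LinearMap.ker (Q : X →ₗ[ℂ] X) := by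
      simp [LinearMap.mem_ker, map_sub, hQidem x]
    have h2 : x - Q x ∈ LinearMap.ker (A : X →ₗ[ℂ] X) := by rw [← hQk]; exact h1
    have h3 : A (x - Q x) = 0 := h2
    rw [map_sub, sub_eq_zero] at h3
    exact h3.symm
  -- the two closed subspaces
  set M : Submodule ℂ X := LinearMap.ker (((1 : X →L[ℂ] X) - Q : X →L[ℂ] X) : X →ₗ[ℂ] X) with hM
  set N : Submodule ℂ X := LinearMap.ker (((1 : X →L[ℂ] X) - P : X →L[ℂ] X) : X →ₗ[ℂ] X) with hN
  have hMmem : ∀ x : X, x ∈ M ↔ Q x = x := by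
    intro x
    have h : x ∈ M ↔ ((1 : X →L[ℂ] X) - Q) x = 0 := Iff.rfl
    rw [h, ContinuousLinearMap.sub_apply, ContinuousLinearMap.one_apply, sub_eq_zero, eq_comm]
  have hNmem : ∀ x : X, x ∈ N ↔ P x = x := by
    intro x
    have h : x ∈ N ↔ ((1 : X →L[ℂ] X) - P) x = 0 := Iff.rfl
    rw [h, ContinuousLinearMap.sub_apply, ContinuousLinearMap.one_apply, sub_eq_zero, eq_comm]
  haveI : CompleteSpace M := (ContinuousLinearMap.isClosed_ker _).completeSpace_coe
  haveI : CompleteSpace N := (ContinuousLinearMap.isClosed_ker _).completeSpace_coe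
  -- the restricted map
  have hmemN : ∀ x : M, A (x : X) ∈ N := by
    intro x
    exact (hNmem _).mpr (hPA _)
  set f : M →L[ℂ] N :=
    ContinuousLinearMap.codRestrict (A.comp (Submodule.subtypeL M)) N hmemN with hf
  have hfapp : ∀ x : M, (f x : X) = A (x : X) := fun x => rfl
  have hinj : LinearMap.ker (f : M →ₗ[ℂ] N) = ⊥ := by
    rw [LinearMap.ker_eq_bot']
    intro x hx
    have hAx : A (x : X) = 0 := by
      have := congrArg (Subtype.val) hx
      simpa [hfapp] using this
    have hxker : (x : X) ∈ LinearMap.ker (Q : X →ₗ[ℂ] X) := by rw [hQk]; exact hAx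
    have hQx : Q (x : X) = 0 := hxker
    have hx2 : Q (x : X) = (x : X) := (hMmem _).mp x.2
    ext
    rw [← hx2, hQx]
    rfl
  have hsurj : LinearMap.range (f : M →ₗ[ℂ] N) = ⊤ := by
    rw [LinearMap.range_eq_top]
    intro y
    have hy : P (y : X) = (y : X) := (hNmem _).mp y.2
    have hymem : (y : X) ∈ LinearMap.range (A : X →ₗ[ℂ] X) := by rw [← hPr]; exact ⟨(y : X), hy⟩
    obtain ⟨w, (hw : A w = (y : X))⟩ := hymem
    refine ⟨⟨Q w, (hMmem _).mpr (hQidem w)⟩, ?_⟩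
    ext
    show A (Q w) = (y : X)
    rw [hAQ w, hw]
  set e := ContinuousLinearEquiv.ofBijective f hinj hsurj with he
  have heapp : ∀ z : M, ((e z : N) : X) = A (z : X) := by
    intro z
    have h1 : ⇑e = ⇑f := by rw [he]; exact ContinuousLinearEquiv.coeFn_ofBijective f hinj hsurj
    rw [h1, hfapp]
  set S : X →L[ℂ] X :=
    (Submodule.subtypeL M).comp ((e.symm : N →L[ℂ] M).comp
      (ContinuousLinearMap.codRestrict P N (fun x => (hNmem _).mpr (hPidem x)))) with hS
  have hSapp : ∀ y : X, S y = (e.symm ⟨P y, (hNmem _).mpr (hPidem y)⟩ : X) := fun y => rfl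
  have hAS : ∀ y : X, A (S y) = P y := by
    intro y
    rw [hSapp y, ← heapp, e.apply_symm_apply]
  have hSA : ∀ x : X, S (A x) = Q x := by
    intro x
    have hmQ : (⟨Q x, (hMmem _).mpr (hQidem x)⟩ : M) =
        e.symm ⟨P (A x), (hNmem _).mpr (hPidem _)⟩ := by
      rw [ContinuousLinearEquiv.eq_symm_apply]
      ext
      rw [heapp]
      simp only
      rw [hAQ x, hPA x]
    have h := congrArg Subtype.val hmQ
    simp only at h
    rw [hSapp (A x), ← h]
  have hQS : ∀ y : X, Q (S y) = S y := by
    intro y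
    exact (hMmem _).mp (e.symm ⟨P y, (hNmem _).mpr (hPidem y)⟩).2
  refine ⟨S, ?_, ?_, ?_⟩ <;> ext y
  · exact hAS y
  · exact hSA y
  · exact hQS y

/-- Let `T ∈ B(X)` and let `U ⊆ ℂ` be an open connected set.  Suppose there exist
two families of bounded projections `P(λ), Q(λ) ∈ B(X)`, `λ ∈ U`, depending continuously on
`λ`, such that `range (P(λ)) = range (T - λI)` and `ker (Q(λ)) = ker (T - λI)` for all
`λ ∈ U`, and such that `P(λ) ∘ P(μ) = P(λ)` and `Q(λ) ∘ Q(μ) = Q(μ)` for all `λ, μ ∈ U`.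
Then there exists a generalized resolvent of `T` on `U`: a function `Rg : U → B(X)` such that
`Rg(λ)` is a generalized inverse of `T - λI` for all `λ ∈ U` and
`Rg(λ) - Rg(μ) = (λ - μ) Rg(λ) ∘ Rg(μ)` for all `λ, μ ∈ U`. -/
theorem stmt7 {X : Type*} [NormedAddCommGroup X] [NormedSpace ℂ X] [CompleteSpace X]
    (T : X →L[ℂ] X) (U : Set ℂ) (hU : IsOpen U) (hUc : IsConnected U)
    (P Q : ℂ → X →L[ℂ] X)
    (hPcont : ContinuousOn P U) (hQcont : ContinuousOn Q U)
    (hPproj : ∀ l ∈ U, P l * P l = P l) (hQproj : ∀ l ∈ U, Q l * Q l = Q l)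
    (hPran : ∀ l ∈ U, LinearMap.range (P l : X →ₗ[ℂ] X) = LinearMap.range ((T - l • 1 : X →L[ℂ] X) : X →ₗ[ℂ] X))
    (hQker : ∀ l ∈ U, LinearMap.ker (Q l : X →ₗ[ℂ] X) = LinearMap.ker ((T - l • 1 : X →L[ℂ] X) : X →ₗ[ℂ] X))
    (hPP : ∀ l ∈ U, ∀ m ∈ U, P l * P m = P l)
    (hQQ : ∀ l ∈ U, ∀ m ∈ U, Q l * Q m = Q m) :
    ∃ Rg : ℂ → X →L[ℂ] X,
      (∀ l ∈ U, (T - l • 1) * Rg l * (T - l • 1) = T - l • 1 ∧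
                Rg l * (T - l • 1) * Rg l = Rg l) ∧
      (∀ l ∈ U, ∀ m ∈ U, Rg l - Rg m = (l - m) • (Rg l * Rg m)) := by
  classical
  have ap : ∀ (F G : X →L[ℂ] X), F = G → ∀ z : X, F z = G z :=
    fun F G h z => congrFun (congrArg DFunLike.coe h) z
  -- choose the generalized inverses
  set Rg : ℂ → X →L[ℂ] X := fun l =>
    if h : l ∈ U then
      Classical.choose (aux_exists_S (T - l • 1) (P l) (Q l) (hPproj l h) (hQproj l h)
        (hPran l h) (hQker l h))
    else 0 with hRg
  have hspec : ∀ l ∈ U, (T - l • 1) * Rg l = P l ∧ Rg l * (T - l • 1) = Q l ∧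
      Q l * Rg l = Rg l := by
    intro l hl
    have h := Classical.choose_spec (aux_exists_S (T - l • 1) (P l) (Q l) (hPproj l hl)
      (hQproj l hl) (hPran l hl) (hQker l hl))
    simpa [hRg, dif_pos hl] using h
  -- P l fixes the range of T - l • 1
  have hPAfix : ∀ l ∈ U, ∀ x : X, P l ((T - l • 1) x) = (T - l • 1) x := by
    intro l hl x
    obtain ⟨w, (hw : P l w = (T - l • 1) x)⟩ : (T - l • 1) x ∈ LinearMap.range (P l : X →ₗ[ℂ] X) := by
      rw [hPran l hl]; exact ⟨x, rfl⟩
    have hPi := ap _ _ (hPproj l hl)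
    calc P l ((T - l • 1) x) = P l (P l w) := by rw [hw]
      _ = (P l * P l) w := rfl
      _ = P l w := by rw [hPproj l hl]
      _ = (T - l • 1) x := hw
  refine ⟨Rg, ?_, ?_⟩
  · intro l hl
    obtain ⟨h1, h2, h3⟩ := hspec l hl
    constructor
    · ext z
      have e1 : ((T - l • 1) * Rg l * (T - l • 1)) z = P l ((T - l • 1) z) := by
        rw [h1]; rfl
      rw [e1]; exact hPAfix l hl z
    · calc Rg l * (T - l • 1) * Rg l = Q l * Rg l := by rw [h2]
        _ = Rg l := h3
  · intro l hl m hm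
    obtain ⟨hAS_l, hSA_l, hQS_l⟩ := hspec l hl
    obtain ⟨hAS_m, hSA_m, hQS_m⟩ := hspec m hm
    ext y
    set x : X := Rg m y with hx
    -- basic facts
    have hAmx : (T - m • 1) x = P m y := ap _ _ hAS_m y
    have hQmx : Q m x = x := ap _ _ hQS_m y
    have hQlx : Q l x = x := by
      calc Q l x = Q l (Q m x) := by rw [hQmx]
        _ = (Q l * Q m) x := rfl
        _ = Q m x := by rw [hQQ l hl m hm]
        _ = x := hQmx
    set u : X := Rg l y - x - (l - m) • Rg l x with hu
    have hQlRg : ∀ z : X, Q l (Rg l z) = Rg l z := fun z => ap _ _ hQS_l z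
    have hAlRg : ∀ z : X, (T - l • 1) (Rg l z) = P l z := fun z => ap _ _ hAS_l z
    have hQu : Q l u = u := by
      rw [hu]
      simp only [map_sub, map_smul, hQlRg, hQlx]
    -- key computation : P l y = (T - l•1) x + (l - m) • P l x
    have hkey : P l y = (T - l • 1) x + (l - m) • P l x := by
      have h1 : P l y = P l (P m y) := by
        have := ap _ _ (hPP l hl m hm) y
        calc P l y = (P l * P m) y := this.symm
          _ = P l (P m y) := rfl
      have h2 : (T - m • 1) x = (T - l • 1) x + (l - m) • x := by
        simp only [ContinuousLinearMap.sub_apply, ContinuousLinearMap.smul_apply,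
          ContinuousLinearMap.one_apply]
        module
      rw [h1, ← hAmx, h2, map_add, map_smul, hPAfix l hl x]
    have hAu : (T - l • 1) u = 0 := by
      rw [hu]
      simp only [map_sub, map_smul, hAlRg]
      rw [hkey]
      abel
    -- hence u ∈ ker (Q l), and Q l u = u gives u = 0
    have humem : u ∈ LinearMap.ker (Q l : X →ₗ[ℂ] X) := by
      rw [hQker l hl]
      exact hAu
    have : Q l u = 0 := humem
    have hu0 : u = 0 := by rw [← hQu, this]
    -- conclude
    have hfinal : Rg l y - x = (l - m) • Rg l x := by
      have h := hu0
      rw [hu, sub_eq_zero] at h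
      exact h
    simpa [ContinuousLinearMap.sub_apply, ContinuousLinearMap.smul_apply,
      ContinuousLinearMap.mul_apply, ← hx] using hfinal
end

section
/- Let T ∈ B(X) and let U ⊆ ℂ be an open connected set. There exists a generalized resolvent of T on U if and only if there exists an analytic function R : U → B(X) such that R(λ) is a generalized inverse of T − λI for all λ ∈ U and R'(λ) = R(λ)² for all λ ∈ U. -/
open Metric Set Filter Topology


set_option maxHeartbeats 1000000 in
theorem key_deriv {X : Type*} [NormedAddCommGroup X] [NormedSpace ℂ X]
    (Rg : ℂ → X →L[ℂ] X) (U : Set ℂ) (hU : IsOpen U) {m : ℂ} (hm : m ∈ U)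
    (hri : ∀ l ∈ U, ∀ m ∈ U, Rg l - Rg m = (l - m) • (Rg l * Rg m)) :
    HasDerivAt Rg (Rg m * Rg m) m := by
  set M := ‖Rg m‖ with hM
  have hMnn : 0 ≤ M := norm_nonneg _
  have hbound : ∀ l ∈ U, ‖l - m‖ * M ≤ 1/2 → ‖Rg l - Rg m‖ ≤ 2 * M^2 * ‖l - m‖ := by
    intro l hl hsm
    have h := hri l hl m hm
    have e1 : ‖Rg l - Rg m‖ = ‖l - m‖ * ‖Rg l * Rg m‖ := by
      rw [h]; exact norm_smul (l - m) (Rg l * Rg m)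
    have e2 : ‖Rg l * Rg m‖ ≤ ‖Rg l‖ * M := norm_mul_le _ _
    have h2 : ‖Rg l‖ ≤ ‖Rg l - Rg m‖ + M := by
      calc ‖Rg l‖ = ‖(Rg l - Rg m) + Rg m‖ := by rw [sub_add_cancel]
        _ ≤ _ := norm_add_le _ _
    have h3 : ‖Rg l - Rg m‖ ≤ ‖l - m‖ * ((‖Rg l - Rg m‖ + M) * M) := by
      have h5 : ‖Rg l * Rg m‖ ≤ (‖Rg l - Rg m‖ + M) * M :=
        e2.trans (by gcongr)
      calc ‖Rg l - Rg m‖ = ‖l - m‖ * ‖Rg l * Rg m‖ := e1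
        _ ≤ ‖l - m‖ * ((‖Rg l - Rg m‖ + M) * M) := by gcongr
    have h4 : ‖l - m‖ * M * ‖Rg l - Rg m‖ ≤ (1/2) * ‖Rg l - Rg m‖ :=
      mul_le_mul_of_nonneg_right hsm (norm_nonneg _)
    nlinarith [norm_nonneg (l - m), norm_nonneg (Rg l - Rg m)]
  have hcont : Tendsto Rg (𝓝[≠] m) (𝓝 (Rg m)) := by
    have h0 : Tendsto (fun l => Rg l - Rg m) (𝓝[≠] m) (𝓝 0) := by
      apply squeeze_zero_norm' (a := fun l => 2 * M^2 * ‖l - m‖)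
      · have h1 : ∀ᶠ l in 𝓝[≠] m, l ∈ U :=
          eventually_nhdsWithin_of_eventually_nhds (hU.eventually_mem hm)
        have h2 : ∀ᶠ l in 𝓝[≠] m, ‖l - m‖ * M ≤ 1/2 := by
          have : Tendsto (fun l : ℂ => ‖l - m‖ * M) (𝓝[≠] m) (𝓝 (‖m - m‖ * M)) := by
            apply Tendsto.mono_left _ nhdsWithin_le_nhds
            exact (((continuous_id.sub continuous_const).norm).mul continuous_const).tendsto m
          simp only [sub_self, norm_zero, zero_mul] at this
          exact this.eventually_le_const (by norm_num)
        filter_upwards [h1, h2] with l hl1 hl2 using hbound l hl1 hl2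
      · have : Tendsto (fun l : ℂ => 2 * M^2 * ‖l - m‖) (𝓝 m) (𝓝 (2 * M^2 * ‖m - m‖)) :=
          (continuous_const.mul ((continuous_id.sub continuous_const).norm)).tendsto m
        simp only [sub_self, norm_zero, mul_zero] at this
        exact this.mono_left nhdsWithin_le_nhds
    have h1 := h0.add_const (Rg m)
    simp only [sub_add_cancel, zero_add] at h1
    exact h1
  rw [hasDerivAt_iff_tendsto_slope]
  have hev : ∀ᶠ l in 𝓝[≠] m, Rg l * Rg m = slope Rg m l := by
    have h1 : ∀ᶠ l in 𝓝[≠] m, l ∈ U :=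
      eventually_nhdsWithin_of_eventually_nhds (hU.eventually_mem hm)
    filter_upwards [h1, self_mem_nhdsWithin] with l hl hne
    rw [slope_def_module, hri l hl m hm, smul_smul,
      inv_mul_cancel₀ (sub_ne_zero.2 hne), one_smul]
  exact Tendsto.congr' hev (hcont.mul tendsto_const_nhds)


theorem key_zero {X : Type*} [NormedAddCommGroup X] [NormedSpace ℂ X] [CompleteSpace X]
    (R : ℂ → X →L[ℂ] X) (U : Set ℂ) (hU : IsOpen U) (hUc : IsPreconnected U)
    (hR : AnalyticOnNhd ℂ R U) (hderiv : ∀ l ∈ U, HasDerivAt R (R l * R l) l)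
    {m : ℂ} (hm : m ∈ U) : ∀ l ∈ U, R l - R m = (l - m) • (R l * R m) := by
  set φ : ℂ → X →L[ℂ] X := fun z => R z * (1 - (z - m) • R m) - R m with hφ
  -- derivative of φ
  have hφderiv : ∀ z ∈ U, HasDerivAt φ (R z * φ z) z := by
    intro z hz
    have hA : HasDerivAt (fun z : ℂ => 1 - (z - m) • R m) (-(R m)) z := by
      have h1 : HasDerivAt (fun z : ℂ => (z - m) • R m) (R m) z := by
        have := ((hasDerivAt_id z).sub_const m).smul_const (R m)
        simpa using this
      simpa using h1.const_sub 1
    have h2 := ((hderiv z hz).mul hA).sub_const (R m)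
    refine h2.congr_deriv ?_
    rw [hφ]
    simp only [mul_sub, mul_neg, mul_one, mul_assoc]
    abel
  -- pick a closed ball inside U
  obtain ⟨r, hr, hball⟩ : ∃ r > 0, closedBall m r ⊆ U := by
    rcases Metric.mem_nhds_iff.mp (hU.mem_nhds hm) with ⟨ε, hε, hsub⟩
    exact ⟨ε/2, by positivity, (closedBall_subset_ball (by linarith)).trans hsub⟩
  -- bound on R on the closed ball
  have hRcont : ContinuousOn R (closedBall m r) := fun z hz =>
    ((hderiv z (hball hz)).continuousAt).continuousWithinAt
  obtain ⟨C, hC⟩ := (isCompact_closedBall m r).exists_bound_of_continuousOn hRcont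
  have hC0 : 0 ≤ C := le_trans (norm_nonneg _) (hC m (mem_closedBall_self hr.le))
  -- φ vanishes on the closed ball, by Gronwall
  have hzero : ∀ l ∈ closedBall m r, φ l = 0 := by
    intro l hl
    set γ : ℝ → ℂ := fun t => m + t • (l - m) with hγ
    have hγmem : ∀ t ∈ Icc (0:ℝ) 1, γ t ∈ closedBall m r := by
      intro t ht
      rw [mem_closedBall, dist_eq_norm, hγ]
      simp only [add_sub_cancel_left, norm_smul, Real.norm_eq_abs,
        abs_of_nonneg ht.1]
      calc t * ‖l - m‖ ≤ 1 * ‖l - m‖ := by gcongr; exact ht.2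
        _ = ‖l - m‖ := one_mul _
        _ ≤ r := by rwa [mem_closedBall, dist_eq_norm] at hl
    have hγd : ∀ t : ℝ, HasDerivAt γ (l - m) t := by
      intro t
      have := ((hasDerivAt_id t).smul_const (l - m)).const_add m
      simpa [hγ] using this
    have hg : ∀ t ∈ Icc (0:ℝ) 1,
        HasDerivAt (φ ∘ γ) ((l - m) • (R (γ t) * φ (γ t))) t := by
      intro t ht
      exact (hφderiv (γ t) (hball (hγmem t ht))).scomp t (hγd t)
    have hgc : ContinuousOn (φ ∘ γ) (Icc (0:ℝ) 1) := fun t ht =>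
      ((hg t ht).continuousAt).continuousWithinAt
    have hg0 : ‖(φ ∘ γ) 0‖ ≤ 0 := by
      have : γ 0 = m := by simp [hγ]
      simp [Function.comp, this, hφ]
    have hbd : ∀ t ∈ Ico (0:ℝ) 1,
        ‖(l - m) • (R (γ t) * φ (γ t))‖ ≤ (‖l - m‖ * C) * ‖(φ ∘ γ) t‖ + 0 := by
      intro t ht
      rw [add_zero]
      calc ‖(l - m) • (R (γ t) * φ (γ t))‖
          = ‖l - m‖ * ‖R (γ t) * φ (γ t)‖ := norm_smul (l - m) (R (γ t) * φ (γ t))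
        _ ≤ ‖l - m‖ * (C * ‖φ (γ t)‖) := by
            gcongr
            exact (norm_mul_le _ _).trans
              (by gcongr; exact hC _ (hγmem t (Ico_subset_Icc_self ht)))
        _ = (‖l - m‖ * C) * ‖(φ ∘ γ) t‖ := by rw [mul_assoc]; rfl
    have := norm_le_gronwallBound_of_norm_deriv_right_le hgc
      (fun t ht => (hg t (Ico_subset_Icc_self ht)).hasDerivWithinAt) hg0 hbd
      1 (by norm_num)
    rw [gronwallBound_ε0_δ0] at this
    have hγ1 : γ 1 = l := by simp [hγ]
    have : φ l = 0 := by
      have h := norm_le_zero_iff.mp this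
      rwa [Function.comp, hγ1] at h
    exact this
  -- φ is analytic on U
  have hφana : AnalyticOnNhd ℂ φ U := by
    apply AnalyticOnNhd.sub _ analyticOnNhd_const
    apply hR.mul
    exact analyticOnNhd_const.sub ((analyticOnNhd_id.sub analyticOnNhd_const).smul
      analyticOnNhd_const)
  -- identity theorem
  have hEq : EqOn φ 0 U :=
    hφana.eqOn_zero_of_preconnected_of_eventuallyEq_zero hUc hm
      (eventuallyEq_of_mem (closedBall_mem_nhds m hr) hzero)
  intro l hl
  have h2 : R l - (l - m) • (R l * R m) = R m := by
    have h := hEq hl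
    simp only [hφ, Pi.zero_apply] at h
    rw [sub_eq_zero] at h
    have expand : R l * (1 - (l - m) • R m) = R l - (l - m) • (R l * R m) := by
      rw [mul_sub, mul_one, mul_smul_comm]
    rw [← expand]; exact h
  rw [sub_eq_iff_eq_add'] at h2
  conv_lhs => rw [h2]
  rw [add_sub_cancel_right]
/-- Let `T ∈ B(X)` and let `U ⊆ ℂ` be an open connected set.  There exists a
generalized resolvent of `T` on `U` if and only if there exists an analytic function
`R : U → B(X)` such that `R(λ)` is a generalized inverse of `T - λI` for all `λ ∈ U` and
`R'(λ) = R(λ)²` for all `λ ∈ U`. -/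
theorem stmt8 {X : Type*} [NormedAddCommGroup X] [NormedSpace ℂ X] [CompleteSpace X]
    (T : X →L[ℂ] X) (U : Set ℂ) (hU : IsOpen U) (hUc : IsConnected U) :
    (∃ Rg : ℂ → X →L[ℂ] X,
      (∀ l ∈ U, (T - l • 1) * Rg l * (T - l • 1) = T - l • 1 ∧
                Rg l * (T - l • 1) * Rg l = Rg l) ∧
      (∀ l ∈ U, ∀ m ∈ U, Rg l - Rg m = (l - m) • (Rg l * Rg m))) ↔
    (∃ R : ℂ → X →L[ℂ] X, AnalyticOnNhd ℂ R U ∧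
      (∀ l ∈ U, (T - l • 1) * R l * (T - l • 1) = T - l • 1 ∧
                R l * (T - l • 1) * R l = R l) ∧
      (∀ l ∈ U, HasDerivAt R (R l * R l) l)) := by
  constructor
  · rintro ⟨Rg, hgi, hri⟩
    have hd : ∀ l ∈ U, HasDerivAt Rg (Rg l * Rg l) l :=
      fun l hl => key_deriv Rg U hU hl hri
    exact ⟨Rg, DifferentiableOn.analyticOnNhd
      (fun l hl => ((hd l hl).differentiableAt).differentiableWithinAt) hU, hgi, hd⟩
  · rintro ⟨R, hR, hgi, hd⟩
    exact ⟨R, hgi, fun l hl m hm =>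
      key_zero R U hU hUc.isPreconnected hR hd hm l hl⟩
end

section
/- Let T ∈ B(X) be Fredholm and let S₀ ∈ B(X) be a generalized inverse of T. Then T − λI is Fredholm for every λ ∈ ℂ if and only if S₀ − λI is Fredholm for every λ ≠ 0 (i.e. the essential spectrum of S₀ is contained in {0}). -/
variable {X : Type*} [NormedAddCommGroup X] [NormedSpace ℂ X] [CompleteSpace X]

/-- `T` is a Fredholm operator: its kernel is finite dimensional and its range is closed with
finite codimension. -/
def IsFredholmOp (T : X →L[ℂ] X) : Prop :=
  FiniteDimensional ℂ (LinearMap.ker (T : X →ₗ[ℂ] X)) ∧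
  IsClosed (LinearMap.range (T : X →ₗ[ℂ] X) : Set X) ∧
  FiniteDimensional ℂ (X ⧸ LinearMap.range (T : X →ₗ[ℂ] X))

namespace Stmt13Aux

/-- Finite rank operator. -/
def FinRk (F : X →L[ℂ] X) : Prop := FiniteDimensional ℂ (LinearMap.range (F : X →ₗ[ℂ] X))

omit [CompleteSpace X] in
lemma finRk_of_le {F : X →L[ℂ] X} {p : Submodule ℂ X} [FiniteDimensional ℂ p]
    (h : LinearMap.range (F : X →ₗ[ℂ] X) ≤ p) : FinRk F :=
  Submodule.finiteDimensional_of_le h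

omit [CompleteSpace X] in
lemma FinRk.add {F G : X →L[ℂ] X} (hF : FinRk F) (hG : FinRk G) : FinRk (F + G) := by
  haveI : FiniteDimensional ℂ (LinearMap.range (F : X →ₗ[ℂ] X)) := hF
  haveI : FiniteDimensional ℂ (LinearMap.range (G : X →ₗ[ℂ] X)) := hG
  haveI : FiniteDimensional ℂ ↥(LinearMap.range (F : X →ₗ[ℂ] X) ⊔ LinearMap.range (G : X →ₗ[ℂ] X)) :=
    Submodule.finiteDimensional_sup _ _
  refine finRk_of_le (p := LinearMap.range (F : X →ₗ[ℂ] X) ⊔ LinearMap.range (G : X →ₗ[ℂ] X)) ?_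
  rintro x ⟨y, rfl⟩
  exact Submodule.add_mem_sup (LinearMap.mem_range_self _ y) (LinearMap.mem_range_self _ y)

omit [CompleteSpace X] in
lemma FinRk.neg {F : X →L[ℂ] X} (hF : FinRk F) : FinRk (-F) := by
  haveI : FiniteDimensional ℂ (LinearMap.range (F : X →ₗ[ℂ] X)) := hF
  refine finRk_of_le (p := LinearMap.range (F : X →ₗ[ℂ] X)) ?_
  rintro x ⟨y, rfl⟩
  exact ⟨-y, by simp⟩

omit [CompleteSpace X] in
lemma FinRk.sub {F G : X →L[ℂ] X} (hF : FinRk F) (hG : FinRk G) : FinRk (F - G) := by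
  rw [sub_eq_add_neg]; exact hF.add hG.neg

omit [CompleteSpace X] in
lemma FinRk.smul {F : X →L[ℂ] X} (c : ℂ) (hF : FinRk F) : FinRk (c • F) := by
  haveI : FiniteDimensional ℂ (LinearMap.range (F : X →ₗ[ℂ] X)) := hF
  refine finRk_of_le (p := LinearMap.range (F : X →ₗ[ℂ] X)) ?_
  rintro x ⟨y, rfl⟩
  exact ⟨c • y, by simp⟩

omit [CompleteSpace X] in
lemma FinRk.mul_left (A : X →L[ℂ] X) {F : X →L[ℂ] X} (hF : FinRk F) : FinRk (A * F) := by
  haveI : FiniteDimensional ℂ (LinearMap.range (F : X →ₗ[ℂ] X)) := hF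
  haveI : FiniteDimensional ℂ ((LinearMap.range (F : X →ₗ[ℂ] X)).map (A : X →ₗ[ℂ] X)) :=
    Module.Finite.map _ _
  refine finRk_of_le (p := (LinearMap.range (F : X →ₗ[ℂ] X)).map (A : X →ₗ[ℂ] X)) ?_
  rintro x ⟨y, rfl⟩
  exact ⟨F y, LinearMap.mem_range_self _ y, rfl⟩

omit [CompleteSpace X] in
lemma FinRk.mul_right (A : X →L[ℂ] X) {F : X →L[ℂ] X} (hF : FinRk F) : FinRk (F * A) := by
  haveI : FiniteDimensional ℂ (LinearMap.range (F : X →ₗ[ℂ] X)) := hF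
  refine finRk_of_le (p := LinearMap.range (F : X →ₗ[ℂ] X)) ?_
  rintro x ⟨y, rfl⟩
  exact ⟨A y, rfl⟩

/-- Invertible modulo finite rank operators. -/
def Reg (A : X →L[ℂ] X) : Prop :=
  ∃ B : X →L[ℂ] X, FinRk (1 - A * B) ∧ FinRk (1 - B * A)

/-- A submodule containing a closed finite-codimensional submodule is itself closed and of
finite codimension. -/
lemma sandwich {p q : Submodule ℂ X} (hqp : q ≤ p) (hqc : IsClosed (q : Set X))
    (hq : FiniteDimensional ℂ (X ⧸ q)) :
    IsClosed (p : Set X) ∧ FiniteDimensional ℂ (X ⧸ p) := by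
  haveI := hq
  constructor
  · haveI : IsClosed (q : Set X) := hqc
    have hcont : Continuous q.mkQ :=
      AddMonoidHomClass.continuous_of_bound q.mkQ 1 fun x => by
        simpa using Submodule.Quotient.norm_mk_le q x
    have hclosed : IsClosed ((p.map q.mkQ : Submodule ℂ (X ⧸ q)) : Set (X ⧸ q)) :=
      Submodule.closed_of_finiteDimensional _
    have h1 : Submodule.comap q.mkQ (p.map q.mkQ) = p := by
      rw [Submodule.comap_map_mkQ]; exact sup_eq_right.mpr hqp
    have h2 : (p : Set X) = q.mkQ ⁻¹' (p.map q.mkQ : Set (X ⧸ q)) := by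
      conv_lhs => rw [← h1]
      rfl
    rw [h2]
    exact hclosed.preimage hcont
  · have h : q ≤ LinearMap.ker p.mkQ := by rwa [Submodule.ker_mkQ]
    exact Module.Finite.of_surjective (q.liftQ p.mkQ h) <| by
      intro x
      obtain ⟨y, rfl⟩ := Submodule.mkQ_surjective p x
      exact ⟨Submodule.Quotient.mk y, rfl⟩

theorem fredholm_of_reg {A : X →L[ℂ] X} (h : Reg A) : IsFredholmOp A := by
  obtain ⟨B, hH, hG⟩ := h
  haveI : FiniteDimensional ℂ (LinearMap.range ((1 - A * B : X →L[ℂ] X) : X →ₗ[ℂ] X)) := hH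
  haveI : FiniteDimensional ℂ (LinearMap.range ((1 - B * A : X →L[ℂ] X) : X →ₗ[ℂ] X)) := hG
  have hker : FiniteDimensional ℂ (LinearMap.ker (A : X →ₗ[ℂ] X)) := by
    refine Submodule.finiteDimensional_of_le (S₂ := LinearMap.range ((1 - B * A : X →L[ℂ] X) : X →ₗ[ℂ] X)) ?_
    intro x hx
    have hx' : A x = 0 := hx
    exact ⟨x, by simp [ContinuousLinearMap.sub_apply, ContinuousLinearMap.mul_apply, hx']⟩
  have hle : LinearMap.ker ((1 - A * B : X →L[ℂ] X) : X →ₗ[ℂ] X) ≤ LinearMap.range (A : X →ₗ[ℂ] X) := by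
    intro x hx
    have hx' : x - A (B x) = 0 := hx
    exact ⟨B x, (sub_eq_zero.mp hx').symm⟩
  have hclosed : IsClosed ((LinearMap.ker ((1 - A * B : X →L[ℂ] X) : X →ₗ[ℂ] X) : Submodule ℂ X) : Set X) :=
    ContinuousLinearMap.isClosed_ker _
  have hquot : FiniteDimensional ℂ (X ⧸ LinearMap.ker ((1 - A * B : X →L[ℂ] X) : X →ₗ[ℂ] X)) := by
    haveI : FiniteDimensional ℂ
        (LinearMap.range ((1 - A * B : X →L[ℂ] X) : X →ₗ[ℂ] X)) := hH
    exact Module.Finite.equiv (LinearMap.quotKerEquivRange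
      ((1 - A * B : X →L[ℂ] X) : X →ₗ[ℂ] X)).symm
  obtain ⟨h1, h2⟩ := sandwich hle hclosed hquot
  exact ⟨hker, h1, h2⟩

theorem reg_of_fredholm {A : X →L[ℂ] X} (h : IsFredholmOp A) : Reg A := by
  obtain ⟨hK, hRc, hRq⟩ := h
  set K := LinearMap.ker (A : X →ₗ[ℂ] X) with hKdef
  set R := LinearMap.range (A : X →ₗ[ℂ] X) with hRdef
  haveI : FiniteDimensional ℂ K := hK
  haveI : FiniteDimensional ℂ (X ⧸ R) := hRq
  obtain ⟨πK, hπK⟩ := Submodule.ClosedComplemented.of_finiteDimensional K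
  obtain ⟨πR, hπR⟩ := Submodule.ClosedComplemented.of_quotient_finiteDimensional hRc
  set PK : X →L[ℂ] X := K.subtypeL.comp πK with hPKdef
  have hPKmem : ∀ x, PK x ∈ K := fun x => (πK x).2
  have hPKid : ∀ x (hx : x ∈ K), PK x = x := fun x hx =>
    congrArg Subtype.val (hπK ⟨x, hx⟩)
  set M := LinearMap.ker (PK : X →ₗ[ℂ] X) with hMdef
  haveI : CompleteSpace M := (ContinuousLinearMap.isClosed_ker PK).completeSpace_coe
  haveI : CompleteSpace R := hRc.completeSpace_coe
  have hΦmem : ∀ m : M, (A.comp M.subtypeL) m ∈ R := fun m => ⟨m.1, rfl⟩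
  set Φ : M →L[ℂ] R := (A.comp M.subtypeL).codRestrict R hΦmem with hΦdef
  have hΦapp : ∀ m : M, (Φ m : X) = A m.1 := fun m => rfl
  have hinj : LinearMap.ker (Φ : M →ₗ[ℂ] R) = ⊥ := by
    rw [LinearMap.ker_eq_bot']
    intro m hm
    have h1 : A m.1 = 0 := congrArg Subtype.val hm
    have h3 : PK m.1 = m.1 := hPKid _ h1
    have h4 : PK m.1 = 0 := m.2
    exact Subtype.ext (by rw [← h3, h4]; simp)
  have hMsub : ∀ x, x - PK x ∈ M := by
    intro x
    show PK (x - PK x) = 0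
    rw [map_sub, hPKid _ (hPKmem x), sub_self]
  have hAPK : ∀ x, A (PK x) = 0 := fun x => hPKmem x
  have hsurj : LinearMap.range (Φ : M →ₗ[ℂ] R) = ⊤ := by
    rw [LinearMap.range_eq_top]
    rintro ⟨y, hy⟩
    obtain ⟨x, rfl⟩ := hy
    refine ⟨⟨x - PK x, hMsub x⟩, ?_⟩
    apply Subtype.ext
    show A (x - PK x) = A x
    rw [map_sub, hAPK, sub_zero]
  set e := ContinuousLinearEquiv.ofBijective Φ hinj hsurj with hedef
  have happ : ∀ m : M, e m = Φ m := fun m => rfl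
  set B : X →L[ℂ] X := M.subtypeL.comp ((e.symm : R →L[ℂ] M).comp πR) with hBdef
  have hAB : ∀ x, (A * B) x = (πR x : X) := by
    intro x
    show A ((e.symm (πR x) : M) : X) = _
    have h1 : (Φ (e.symm (πR x)) : X) = A ((e.symm (πR x) : M) : X) := hΦapp _
    rw [← h1, ← happ, e.apply_symm_apply]
  have hABfr : FinRk (1 - A * B) := by
    have key : ∀ z, z ∈ LinearMap.range ((1 - A * B : X →L[ℂ] X) : X →ₗ[ℂ] X) → z ∈ R → z = 0 := by
      rintro _ ⟨y, rfl⟩ hmem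
      have h1 : ((1 - A * B) y : X) = y - (πR y : X) := by
        simp [ContinuousLinearMap.sub_apply, ContinuousLinearMap.mul_apply, hAB y]
      have h2 : (πR ((1 - A * B) y) : X) = (1 - A * B) y :=
        congrArg Subtype.val (hπR ⟨_, hmem⟩)
      have h4 : πR ((πR y : X)) = πR y := hπR (πR y)
      have h3 : (πR ((1 - A * B) y) : X) = 0 := by
        rw [h1, map_sub, Submodule.coe_sub, h4]
        exact sub_self _
      show (1 - A * B) y = 0
      rw [← h2, h3]
    refine FiniteDimensional.of_injective
      ((R.mkQ).comp (LinearMap.range ((1 - A * B : X →L[ℂ] X) : X →ₗ[ℂ] X)).subtype) ?_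
    rw [← LinearMap.ker_eq_bot, LinearMap.ker_eq_bot']
    intro z hz
    have hz1 : R.mkQ z.1 = 0 := hz
    have hz2 : z.1 ∈ R := by rwa [← Submodule.ker_mkQ R]
    exact Subtype.ext (key z.1 z.2 hz2)
  have hBA : ∀ x, (B * A) x = x - PK x := by
    intro x
    have hmemR : A x ∈ R := ⟨x, rfl⟩
    have hπRA : πR (A x) = ⟨A x, hmemR⟩ := hπR ⟨A x, hmemR⟩
    have hΦval : e ⟨x - PK x, hMsub x⟩ = (⟨A x, hmemR⟩ : R) := by
      rw [happ]
      apply Subtype.ext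
      show A (x - PK x) = A x
      rw [map_sub, hAPK, sub_zero]
    have h6 : e.symm ⟨A x, hmemR⟩ = ⟨x - PK x, hMsub x⟩ := by
      rw [← hΦval, e.symm_apply_apply]
    show ((e.symm (πR (A x)) : M) : X) = x - PK x
    rw [hπRA, h6]
  have hBAfr : FinRk (1 - B * A) := by
    refine finRk_of_le (p := K) ?_
    rintro _ ⟨y, rfl⟩
    have h7 : (1 - B * A) y = PK y := by
      simp [ContinuousLinearMap.sub_apply, ContinuousLinearMap.mul_apply, hBA y]
    show (1 - B * A) y ∈ K
    rw [h7]
    exact hPKmem y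
  exact ⟨B, hABfr, hBAfr⟩

lemma Reg.mul {A B : X →L[ℂ] X} (hA : Reg A) (hB : Reg B) : Reg (A * B) := by
  obtain ⟨A', hA1, hA2⟩ := hA
  obtain ⟨B', hB1, hB2⟩ := hB
  refine ⟨B' * A', ?_, ?_⟩
  · have hid : 1 - (A * B) * (B' * A') = (1 - A * A') + A * (1 - B * B') * A' := by
      noncomm_ring
    rw [hid]
    exact hA1.add (((hB1.mul_left A).mul_right A'))
  · have hid : 1 - (B' * A') * (A * B) = (1 - B' * B) + B' * (1 - A' * A) * B := by
      noncomm_ring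
    rw [hid]
    exact hB2.add ((hA2.mul_left B').mul_right B)

lemma Reg.smul {A : X →L[ℂ] X} {c : ℂ} (hc : c ≠ 0) (hA : Reg A) : Reg (c • A) := by
  obtain ⟨B, h1, h2⟩ := hA
  refine ⟨c⁻¹ • B, ?_, ?_⟩
  · have hid : (c • A) * (c⁻¹ • B) = A * B := by
      rw [smul_mul_assoc, mul_smul_comm, smul_smul, mul_inv_cancel₀ hc, one_smul]
    rwa [hid]
  · have hid : (c⁻¹ • B) * (c • A) = B * A := by
      rw [smul_mul_assoc, mul_smul_comm, smul_smul, inv_mul_cancel₀ hc, one_smul]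
    rwa [hid]

lemma Reg.add_finRk {A F : X →L[ℂ] X} (hA : Reg A) (hF : FinRk F) : Reg (A + F) := by
  obtain ⟨B, h1, h2⟩ := hA
  refine ⟨B, ?_, ?_⟩
  · have hid : 1 - (A + F) * B = (1 - A * B) - F * B := by noncomm_ring
    rw [hid]
    exact h1.sub (hF.mul_right B)
  · have hid : 1 - B * (A + F) = (1 - B * A) - B * F := by noncomm_ring
    rw [hid]
    exact h2.sub (hF.mul_left B)

end Stmt13Aux

/-- Let `T ∈ B(X)` be Fredholm and let `S₀ ∈ B(X)` be a generalized inverse of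
`T`.  Then `T - λI` is Fredholm for every `λ ∈ ℂ` if and only if `S₀ - λI` is Fredholm for
every `λ ≠ 0` (i.e. the essential spectrum of `S₀` is contained in `{0}`). -/
theorem stmt13 (T S₀ : X →L[ℂ] X) (hFred : IsFredholmOp T)
    (hTST : T * S₀ * T = T) (hSTS : S₀ * T * S₀ = S₀) :
    (∀ l : ℂ, IsFredholmOp (T - l • 1)) ↔
    (∀ l : ℂ, l ≠ 0 → IsFredholmOp (S₀ - l • 1)) := by
  classical
  obtain ⟨hkerT, hranTc, hranTq⟩ := hFred
  -- `1 - T * S₀` has finite rank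
  have hF1 : Stmt13Aux.FinRk (1 - T * S₀) := by
    haveI : FiniteDimensional ℂ (X ⧸ LinearMap.range (T : X →ₗ[ℂ] X)) := hranTq
    refine FiniteDimensional.of_injective
      (((LinearMap.range (T : X →ₗ[ℂ] X)).mkQ).comp (LinearMap.range ((1 - T * S₀ : X →L[ℂ] X) : X →ₗ[ℂ] X)).subtype) ?_
    rw [← LinearMap.ker_eq_bot, LinearMap.ker_eq_bot']
    intro z hz
    have hz2 : z.1 ∈ LinearMap.range (T : X →ₗ[ℂ] X) := by
      have : (LinearMap.range (T : X →ₗ[ℂ] X)).mkQ z.1 = 0 := hz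
      rwa [← Submodule.ker_mkQ (LinearMap.range (T : X →ₗ[ℂ] X))]
    obtain ⟨w, hw⟩ := hz2
    obtain ⟨y, hy⟩ := z.2
    have hidem : (1 - T * S₀) * (1 - T * S₀) = 1 - T * S₀ := by
      have : (1 - T * S₀) * (1 - T * S₀) = 1 - T * S₀ - (T * S₀ - T * S₀ * T * S₀) := by
        noncomm_ring
      rw [this, hTST, sub_self, sub_zero]
    have hTkill : (1 - T * S₀) * T = 0 := by
      have : (1 - T * S₀) * T = T - T * S₀ * T := by noncomm_ring
      rw [this, hTST, sub_self]
    have h1 : z.1 = (1 - T * S₀) z.1 := by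
      conv_lhs => rw [← hy]
      rw [← hy]
      change (1 - T * S₀) y = (1 - T * S₀) ((1 - T * S₀) y)
      rw [← ContinuousLinearMap.mul_apply, hidem]
    have h2 : (1 - T * S₀) z.1 = 0 := by
      rw [← hw]
      change (1 - T * S₀) (T w) = 0
      rw [← ContinuousLinearMap.mul_apply, hTkill]
      rfl
    exact Subtype.ext (by rw [h1, h2]; simp)
  -- `1 - S₀ * T` has finite rank
  have hF2 : Stmt13Aux.FinRk (1 - S₀ * T) := by
    haveI : FiniteDimensional ℂ (LinearMap.ker (T : X →ₗ[ℂ] X)) := hkerT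
    refine Stmt13Aux.finRk_of_le (p := LinearMap.ker (T : X →ₗ[ℂ] X)) ?_
    rintro _ ⟨y, rfl⟩
    show T ((1 - S₀ * T) y) = 0
    rw [← ContinuousLinearMap.mul_apply]
    have : T * (1 - S₀ * T) = 0 := by
      have h : T * (1 - S₀ * T) = T - T * S₀ * T := by noncomm_ring
      rw [h, hTST, sub_self]
    rw [this]
    rfl
  have hregT : Stmt13Aux.Reg T := ⟨S₀, hF1, hF2⟩
  -- key algebraic identities
  have key1 : ∀ l : ℂ, l ≠ 0 →
      T * (S₀ - l • 1) = (-l) • (T - l⁻¹ • 1) + (-(1 - T * S₀)) := by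
    intro l hl
    have hml : l * l⁻¹ = 1 := mul_inv_cancel₀ hl
    ext x
    simp only [ContinuousLinearMap.mul_apply, ContinuousLinearMap.sub_apply,
      ContinuousLinearMap.add_apply, ContinuousLinearMap.smul_apply,
      ContinuousLinearMap.one_apply, ContinuousLinearMap.neg_apply, map_sub, map_smul]
    rw [smul_sub, smul_smul, neg_mul, hml]
    module
  have key2 : ∀ l : ℂ, l ≠ 0 →
      (S₀ - l • 1) * T = (-l) • (T - l⁻¹ • 1) + (-(1 - S₀ * T)) := by
    intro l hl
    have hml : l * l⁻¹ = 1 := mul_inv_cancel₀ hl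
    ext x
    simp only [ContinuousLinearMap.mul_apply, ContinuousLinearMap.sub_apply,
      ContinuousLinearMap.add_apply, ContinuousLinearMap.smul_apply,
      ContinuousLinearMap.one_apply, ContinuousLinearMap.neg_apply, map_sub, map_smul]
    rw [smul_sub, smul_smul, neg_mul, hml]
    module
  constructor
  · intro hL l hl
    have hT : Stmt13Aux.Reg (T - l⁻¹ • 1) := Stmt13Aux.reg_of_fredholm (hL l⁻¹)
    have hTs : Stmt13Aux.Reg ((-l) • (T - l⁻¹ • 1)) := hT.smul (neg_ne_zero.mpr hl)
    have hTS : Stmt13Aux.Reg (T * (S₀ - l • 1)) := by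
      rw [key1 l hl]
      exact hTs.add_finRk hF1.neg
    have hST : Stmt13Aux.Reg ((S₀ - l • 1) * T) := by
      rw [key2 l hl]
      exact hTs.add_finRk hF2.neg
    have hTSf := Stmt13Aux.fredholm_of_reg hTS
    have hSTf := Stmt13Aux.fredholm_of_reg hST
    refine ⟨?_, ?_, ?_⟩
    · haveI : FiniteDimensional ℂ (LinearMap.ker ((T * (S₀ - l • 1) : X →L[ℂ] X) : X →ₗ[ℂ] X)) := hTSf.1
      refine Submodule.finiteDimensional_of_le
        (S₂ := LinearMap.ker ((T * (S₀ - l • 1) : X →L[ℂ] X) : X →ₗ[ℂ] X)) ?_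
      intro x hx
      have hx' : (S₀ - l • 1) x = 0 := hx
      show T ((S₀ - l • 1) x) = 0
      rw [hx', map_zero]
    · refine (Stmt13Aux.sandwich ?_ hSTf.2.1 hSTf.2.2).1
      rintro _ ⟨y, rfl⟩
      exact ⟨T y, rfl⟩
    · refine (Stmt13Aux.sandwich ?_ hSTf.2.1 hSTf.2.2).2
      rintro _ ⟨y, rfl⟩
      exact ⟨T y, rfl⟩
  · intro hR m
    by_cases hm : m = 0
    · subst hm
      simpa using ⟨hkerT, hranTc, hranTq⟩
    · have hl : m⁻¹ ≠ 0 := inv_ne_zero hm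
      have hS : Stmt13Aux.Reg (S₀ - m⁻¹ • 1) := Stmt13Aux.reg_of_fredholm (hR m⁻¹ hl)
      have hTS : Stmt13Aux.Reg (T * (S₀ - m⁻¹ • 1)) := hregT.mul hS
      have hid : T - m • 1 =
          (-m) • (T * (S₀ - m⁻¹ • 1)) + (-m) • (1 - T * S₀) := by
        have h := key1 m⁻¹ hl
        rw [inv_inv] at h
        rw [h]
        have hmm : -m * -m⁻¹ = 1 := by
          field_simp
        rw [smul_add, smul_smul, hmm, one_smul, smul_neg]
        abel
      rw [hid]
      have : Stmt13Aux.Reg ((-m) • (T * (S₀ - m⁻¹ • 1))) :=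
        hTS.smul (neg_ne_zero.mpr hm)
      exact Stmt13Aux.fredholm_of_reg (this.add_finRk (hF1.smul (-m)))
end

section
/- Let V be a finite-dimensional complex vector space and let N : V → V be a nilpotent linear map. Then there exists a nilpotent linear map S : V → V such that N∘S∘N = N and S∘N∘S = S. -/
open Polynomial Module Submodule

noncomputable section Stmt15Aux

/-- The span of `X^e` in `ℂ[X]`. -/
abbrev stmt15sp (e : ℕ) : Submodule ℂ[X] ℂ[X] := ℂ[X] ∙ ((X : ℂ[X]) ^ e)

/-- The quotient `ℂ[X] ⧸ (X^e)`, a model Jordan block. -/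
abbrev stmt15Q (e : ℕ) := ℂ[X] ⧸ stmt15sp e

/-- `divX` as a `ℂ`-linear map. -/
def stmt15divXL : ℂ[X] →ₗ[ℂ] ℂ[X] where
  toFun := divX
  map_add' _ _ := divX_add
  map_smul' c p := by simp [smul_eq_C_mul, divX_C_mul]

/-- The shift-down operator on `ℂ[X] ⧸ (X^e)`. -/
def stmt15S (e : ℕ) : stmt15Q e →ₗ[ℂ] stmt15Q e :=
  (((stmt15sp e).restrictScalars ℂ).liftQ
    ((((stmt15sp e).mkQ).restrictScalars ℂ) ∘ₗ stmt15divXL ∘ₗ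
      modByMonicHom ((X : ℂ[X]) ^ e))
    (by
      intro x hx
      have hx' : x ∈ stmt15sp e := hx
      obtain ⟨a, ha⟩ := Submodule.mem_span_singleton.mp hx'
      have hdvd : (X : ℂ[X]) ^ e ∣ x := ⟨a, by rw [← ha, smul_eq_mul, mul_comm]⟩
      have : x %ₘ (X : ℂ[X]) ^ e = 0 :=
        (modByMonic_eq_zero_iff_dvd (monic_X_pow e)).mpr hdvd
      simp [LinearMap.mem_ker, modByMonicHom, this, stmt15divXL])) ∘ₗ
  (Submodule.Quotient.restrictScalarsEquiv ℂ (stmt15sp e)).symm.toLinearMap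

/-- Multiplication by `X` on `ℂ[X] ⧸ (X^e)`, as a `ℂ`-linear map. -/
def stmt15N (e : ℕ) : stmt15Q e →ₗ[ℂ] stmt15Q e where
  toFun x := (X : ℂ[X]) • x
  map_add' _ _ := smul_add _ _ _
  map_smul' c x := smul_comm _ _ _

lemma stmt15S_mk (e : ℕ) (q : ℂ[X]) :
    stmt15S e (Submodule.Quotient.mk q) =
      Submodule.Quotient.mk (divX (q %ₘ (X : ℂ[X]) ^ e)) := by
  rw [stmt15S, LinearMap.comp_apply, LinearEquiv.coe_coe,
    Submodule.Quotient.restrictScalarsEquiv_symm_mk, Submodule.liftQ_apply]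
  rfl

lemma stmt15N_mk (e : ℕ) (q : ℂ[X]) :
    stmt15N e (Submodule.Quotient.mk q) = Submodule.Quotient.mk ((X : ℂ[X]) * q) := by
  show (X : ℂ[X]) • (Submodule.Quotient.mk q : stmt15Q e) = _
  rw [← Submodule.Quotient.mk_smul, smul_eq_mul]

lemma stmt15Q_subsingleton : Subsingleton (stmt15Q 0) := by
  rw [Submodule.Quotient.subsingleton_iff]
  simp [stmt15sp]

lemma stmt15_comp1 (e : ℕ) (x : stmt15Q e) :
    stmt15N e (stmt15S e (stmt15N e x)) = stmt15N e x := by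
  obtain ⟨q, rfl⟩ := Submodule.Quotient.mk_surjective _ x
  cases e with
  | zero => have := stmt15Q_subsingleton; exact Subsingleton.elim _ _
  | succ e' =>
    rw [stmt15N_mk, stmt15S_mk, stmt15N_mk]
    set f : ℂ[X] := (X : ℂ[X]) ^ (e' + 1) with hf
    set r : ℂ[X] := ((X : ℂ[X]) * q) %ₘ f with hr
    have hc : r.coeff 0 = 0 := by
      rw [hr, modByMonic_eq_sub_mul_div _ _]
      simp [hf, coeff_X_pow, mul_coeff_zero, coeff_X_zero]
    have hX : (X : ℂ[X]) * divX r = r := by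
      conv_rhs => rw [← X_mul_divX_add r]
      rw [hc, map_zero, add_zero]
    rw [hX, Submodule.Quotient.eq, hr, modByMonic_eq_sub_mul_div _ _,
      sub_sub_cancel_left]
    exact Submodule.neg_mem _ (Submodule.mem_span_singleton.mpr
      ⟨(X : ℂ[X]) * q /ₘ f, by rw [smul_eq_mul, mul_comm]⟩)

lemma stmt15_comp2 (e : ℕ) (x : stmt15Q e) :
    stmt15S e (stmt15N e (stmt15S e x)) = stmt15S e x := by
  obtain ⟨q, rfl⟩ := Submodule.Quotient.mk_surjective _ x
  cases e with
  | zero => have := stmt15Q_subsingleton; exact Subsingleton.elim _ _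
  | succ e' =>
    rw [stmt15S_mk, stmt15N_mk, stmt15S_mk]
    set r : ℂ[X] := q %ₘ (X : ℂ[X]) ^ (e' + 1) with hr
    set d : ℂ[X] := divX r with hd
    have hdeg : ((X : ℂ[X]) * d).degree < ((X : ℂ[X]) ^ (e' + 1)).degree := by
      rw [degree_X_pow]
      by_cases hd0 : d = 0
      · simp [hd0, Nat.cast_pos]
      · have hr0 : r ≠ 0 := by
          intro h; apply hd0; rw [hd, h, divX_zero]
        have h2 : d.degree < r.degree := degree_divX_lt hr0
        have h3 : r.degree < ((e' + 1 : ℕ) : WithBot ℕ) := by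
          simpa [degree_X_pow] using degree_modByMonic_lt q (monic_X_pow (e' + 1))
        calc ((X : ℂ[X]) * d).degree = d.degree + 1 := by
              rw [degree_mul, degree_X, add_comm]
          _ ≤ r.degree := Nat.WithBot.add_one_le_of_lt h2
          _ < _ := h3
    have h1 : ((X : ℂ[X]) * d) %ₘ (X : ℂ[X]) ^ (e' + 1) = (X : ℂ[X]) * d :=
      (modByMonic_eq_self_iff (monic_X_pow _)).mpr hdeg
    have h4 : divX ((X : ℂ[X]) * d) = d := Polynomial.ext fun n => by
      rw [coeff_divX, coeff_X_mul]
    rw [h1, h4]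

lemma stmt15S_pow_mk (e : ℕ) :
    ∀ (m : ℕ) (q : ℂ[X]), q.degree < (m : ℕ) →
      (stmt15S e ^ m) (Submodule.Quotient.mk q) = 0
  | 0, q, h => by
    have hq : q = 0 := by
      by_contra h0
      exact absurd h (not_lt.mpr (by simpa using zero_le_degree_iff.mpr h0))
    simp [hq]
  | (m + 1), q, h => by
    rw [pow_succ, Module.End.mul_apply, stmt15S_mk]
    apply stmt15S_pow_mk e m
    set r : ℂ[X] := q %ₘ (X : ℂ[X]) ^ e with hrdef
    by_cases h0 : r = 0
    · rw [h0, divX_zero, degree_zero]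
      exact WithBot.bot_lt_coe _
    · have hle : r.degree ≤ q.degree := by
        by_cases hdeg : q.degree < ((X : ℂ[X]) ^ e).degree
        · rw [hrdef, (modByMonic_eq_self_iff (monic_X_pow e)).mpr hdeg]
        · exact le_trans (degree_modByMonic_lt q (monic_X_pow e)).le (not_lt.mp hdeg)
      have h2 : r.degree < ((m : ℕ) : WithBot ℕ) + 1 :=
        lt_of_le_of_lt hle (by rwa [Nat.cast_add, Nat.cast_one] at h)
      have h3 : (divX r).degree + 1 ≤ r.degree :=
        Nat.WithBot.add_one_le_of_lt (degree_divX_lt h0)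
      have h5 : (divX r).degree + 1 < ((m : ℕ) : WithBot ℕ) + 1 := lt_of_le_of_lt h3 h2
      exact lt_of_add_lt_add_right h5

lemma stmt15S_pow (e : ℕ) : stmt15S e ^ (e + 1) = 0 := by
  apply LinearMap.ext
  intro x
  obtain ⟨q, rfl⟩ := Submodule.Quotient.mk_surjective _ x
  rw [pow_succ, Module.End.mul_apply, stmt15S_mk, LinearMap.zero_apply]
  apply stmt15S_pow_mk
  by_cases h0 : q %ₘ (X : ℂ[X]) ^ e = 0
  · rw [h0, divX_zero, degree_zero]
    exact WithBot.bot_lt_coe _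
  · calc (divX (q %ₘ (X : ℂ[X]) ^ e)).degree < (q %ₘ (X : ℂ[X]) ^ e).degree :=
          degree_divX_lt h0
      _ < _ := by simpa [degree_X_pow] using degree_modByMonic_lt q (monic_X_pow e)

end Stmt15Aux

noncomputable section Stmt15DS

variable {ι : Type} [DecidableEq ι] (e : ι → ℕ)

/-- Shift-down on the direct sum of blocks. -/
def stmt15SX : (Π₀ i, stmt15Q (e i)) →ₗ[ℂ] Π₀ i, stmt15Q (e i) :=
  DFinsupp.mapRange.linearMap fun i => stmt15S (e i)

/-- Multiplication by `X` on the direct sum of blocks. -/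
def stmt15NX : (Π₀ i, stmt15Q (e i)) →ₗ[ℂ] Π₀ i, stmt15Q (e i) :=
  DFinsupp.mapRange.linearMap fun i => stmt15N (e i)

lemma stmt15SX_apply (z : Π₀ i, stmt15Q (e i)) (i : ι) :
    stmt15SX e z i = stmt15S (e i) (z i) := by
  simp [stmt15SX, DFinsupp.mapRange.linearMap, DFinsupp.mapRange_apply, LinearMap.coe_mk, AddHom.coe_mk]
  rfl

lemma stmt15NX_apply (z : Π₀ i, stmt15Q (e i)) (i : ι) :
    stmt15NX e z i = stmt15N (e i) (z i) := by
  simp [stmt15NX, DFinsupp.mapRange.linearMap, DFinsupp.mapRange_apply, LinearMap.coe_mk, AddHom.coe_mk]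
  rfl

lemma stmt15NX_smul (z : Π₀ i, stmt15Q (e i)) :
    stmt15NX e z = (X : ℂ[X]) • z := by
  apply DFinsupp.ext
  intro i
  rw [stmt15NX_apply, DFinsupp.smul_apply]
  rfl

lemma stmt15SX_pow (n : ℕ) (z : Π₀ i, stmt15Q (e i)) (i : ι) :
    (stmt15SX e ^ n) z i = (stmt15S (e i) ^ n) (z i) := by
  induction n generalizing z with
  | zero => simp
  | succ n ih =>
    rw [pow_succ, Module.End.mul_apply, ih, stmt15SX_apply, pow_succ, Module.End.mul_apply]

lemma stmt15SX_nilpotent [Fintype ι] : IsNilpotent (stmt15SX e) := by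
  refine ⟨(Finset.univ.sup e) + 1, ?_⟩
  apply LinearMap.ext
  intro z
  apply DFinsupp.ext
  intro i
  rw [stmt15SX_pow]
  obtain ⟨a, ha⟩ : ∃ a, (Finset.univ.sup e) + 1 = (e i + 1) + a :=
    ⟨Finset.univ.sup e - e i, by
      have := Finset.le_sup (f := e) (Finset.mem_univ i); omega⟩
  rw [ha, pow_add, Module.End.mul_apply, stmt15S_pow]
  simp

lemma stmt15DS_comp1 (z : Π₀ i, stmt15Q (e i)) :
    stmt15NX e (stmt15SX e (stmt15NX e z)) = stmt15NX e z := by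
  apply DFinsupp.ext
  intro i
  simp only [stmt15NX_apply, stmt15SX_apply]
  exact stmt15_comp1 _ _

lemma stmt15DS_comp2 (z : Π₀ i, stmt15Q (e i)) :
    stmt15SX e (stmt15NX e (stmt15SX e z)) = stmt15SX e z := by
  apply DFinsupp.ext
  intro i
  simp only [stmt15NX_apply, stmt15SX_apply]
  exact stmt15_comp2 _ _

end Stmt15DS

/-- Transport of the conclusion along a linear equivalence. -/
lemma stmt15_transport {M₁ M₂ : Type*} [AddCommGroup M₁] [Module ℂ M₁]
    [AddCommGroup M₂] [Module ℂ M₂] (F : M₁ ≃ₗ[ℂ] M₂) (A : M₁ →ₗ[ℂ] M₁)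
    (A' S' : M₂ →ₗ[ℂ] M₂) (hA : ∀ v, F (A v) = A' (F v)) (hS : IsNilpotent S')
    (h1 : ∀ y, A' (S' (A' y)) = A' y) (h2 : ∀ y, S' (A' (S' y)) = S' y) :
    ∃ S : M₁ →ₗ[ℂ] M₁, IsNilpotent S ∧ A * S * A = A ∧ S * A * S = S := by
  set S : M₁ →ₗ[ℂ] M₁ :=
    (F.symm : M₂ →ₗ[ℂ] M₁) ∘ₗ S' ∘ₗ (F : M₁ →ₗ[ℂ] M₂) with hSdef
  have hSv : ∀ v, F (S v) = S' (F v) := by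
    intro v
    simp [hSdef, LinearMap.comp_apply]
  refine ⟨S, ?_, ?_, ?_⟩
  · obtain ⟨n, hn⟩ := hS
    refine ⟨n, ?_⟩
    have key : ∀ (m : ℕ) (v : M₁), F ((S ^ m) v) = (S' ^ m) (F v) := by
      intro m
      induction m with
      | zero => intro v; simp
      | succ m ih =>
        intro v
        rw [pow_succ, Module.End.mul_apply, ih, hSv, pow_succ,
          Module.End.mul_apply]
    apply LinearMap.ext
    intro v
    apply F.injective
    rw [key n v, hn]
    simp
  · apply LinearMap.ext
    intro v
    apply F.injective
    calc F ((A * S * A) v) = F (A (S (A v))) := rfl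
      _ = A' (S' (A' (F v))) := by rw [hA, hSv, hA]
      _ = A' (F v) := h1 _
      _ = F (A v) := (hA v).symm
  · apply LinearMap.ext
    intro v
    apply F.injective
    calc F ((S * A * S) v) = F (S (A (S v))) := rfl
      _ = S' (A' (S' (F v))) := by rw [hSv, hA, hSv]
      _ = S' (F v) := h2 _
      _ = F (S v) := (hSv v).symm

set_option maxHeartbeats 1000000 in
/-- Let `V` be a finite dimensional complex vector space and let `N : V → V` be
a nilpotent linear map.  Then there exists a nilpotent linear map `S : V → V` such that
`N∘S∘N = N` and `S∘N∘S = S`. -/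
theorem stmt15 {V : Type*} [AddCommGroup V] [Module ℂ V] [FiniteDimensional ℂ V]
    (N : V →ₗ[ℂ] V) (hN : IsNilpotent N) :
    ∃ S : V →ₗ[ℂ] V, IsNilpotent S ∧ N * S * N = N ∧ S * N * S = S := by
  classical
  obtain ⟨k, hk⟩ := hN
  have h0 : ∀ m : Module.AEval' N, ((X : ℂ[X]) ^ (k + 1)) • m = 0 := by
    intro m
    apply (Module.AEval'.of N).symm.injective
    rw [Module.AEval.of_symm_smul, map_zero]
    have : aeval N ((X : ℂ[X]) ^ (k + 1)) = 0 := by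
      rw [map_pow, aeval_X, pow_succ, hk, zero_mul]
    rw [this, zero_smul]
  have htors : Module.IsTorsion ℂ[X] (Module.AEval' N) := fun m =>
    ⟨⟨(X : ℂ[X]) ^ (k + 1),
      mem_nonZeroDivisors_of_ne_zero (pow_ne_zero _ X_ne_zero)⟩, h0 m⟩
  obtain ⟨ι, hι, p, hp, e, ⟨l⟩⟩ := Module.equiv_directSum_of_isTorsion htors
  haveI := hι
  have hspan : ∀ i, (ℂ[X] ∙ (p i ^ e i)) = stmt15sp (e i) := by
    intro i
    rcases Nat.eq_zero_or_pos (e i) with h0' | hpos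
    · rw [h0']; simp [stmt15sp]
    · have hmem : (X : ℂ[X]) ^ (k + 1) ∈ ℂ[X] ∙ (p i ^ e i) := by
        set y := DirectSum.lof ℂ[X] ι (fun j => ℂ[X] ⧸ (ℂ[X] ∙ (p j ^ e j))) i
            (Submodule.Quotient.mk 1) with hy
        have hz : ((X : ℂ[X]) ^ (k + 1)) • y = 0 := by
          have h1 := h0 (l.symm y)
          calc ((X : ℂ[X]) ^ (k + 1)) • y
              = l (((X : ℂ[X]) ^ (k + 1)) • l.symm y) := by
                rw [map_smul, l.apply_symm_apply]
            _ = 0 := by rw [h1, map_zero]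
        rw [hy, ← map_smul] at hz
        have hzero : ((X : ℂ[X]) ^ (k + 1)) • (Submodule.Quotient.mk 1 :
            ℂ[X] ⧸ (ℂ[X] ∙ (p i ^ e i))) = 0 := by
          apply DirectSum.of_injective (β := fun j => ℂ[X] ⧸ (ℂ[X] ∙ (p j ^ e j))) i
          rw [← DirectSum.lof_eq_of ℂ[X], hz, map_zero]
        rw [← Submodule.Quotient.mk_smul, smul_eq_mul, mul_one,
          Submodule.Quotient.mk_eq_zero] at hzero
        exact hzero
      have hdvd : p i ^ e i ∣ (X : ℂ[X]) ^ (k + 1) := by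
        obtain ⟨a, ha⟩ := Submodule.mem_span_singleton.mp hmem
        exact ⟨a, by rw [← ha, smul_eq_mul, mul_comm]⟩
      have hpp : Prime (p i) := (hp i).prime
      have hdX : p i ∣ (X : ℂ[X]) :=
        hpp.dvd_of_dvd_pow (dvd_trans (dvd_pow_self _ hpos.ne') hdvd)
      have hass : Associated (p i ^ e i) ((X : ℂ[X]) ^ e i) :=
        ((hp i).associated_of_dvd Polynomial.irreducible_X hdX).pow_pow
      exact Ideal.span_singleton_eq_span_singleton.mpr hass
  let l2 : (DirectSum ι fun i => ℂ[X] ⧸ (ℂ[X] ∙ (p i ^ e i))) ≃ₗ[ℂ[X]] Π₀ i, stmt15Q (e i) :=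
    DFinsupp.mapRange.linearEquiv fun i => Submodule.quotEquivOfEq _ _ (hspan i)
  let F : V ≃ₗ[ℂ] Π₀ i, stmt15Q (e i) :=
    (Module.AEval'.of N).trans ((l.trans l2).restrictScalars ℂ)
  have hF : ∀ v, F (N v) = stmt15NX e (F v) := by
    intro v
    show (l.trans l2) (Module.AEval'.of N (N v)) = stmt15NX e ((l.trans l2) (Module.AEval'.of N v))
    rw [← Module.AEval'.X_smul_of, map_smul, stmt15NX_smul]
  exact stmt15_transport (M₁ := V) (M₂ := Π₀ i, stmt15Q (e i)) F N (stmt15NX e) (stmt15SX e) hF (stmt15SX_nilpotent e)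
    (stmt15DS_comp1 e) (stmt15DS_comp2 e)
end
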